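/- arXiv:1812.00434 — 6 statements merged into one kernel-verified Lean document; each statement's English description precedes it below -/
import Mathlib

section
/- Let (f_n)_{n≥0}, (g_n)_{n≥0}, (h_n)_{n≥0} be polynomials in ℝ[t] satisfying h_n(t) = Σ_{m=0}^n C(n,m) t^{n−m} g_m(t) for all n ≥ 0 and g_m(t) = Σ_{k=0}^m C(m,k) f_k(t) for all m ≥ 0. If for every n ≥ 0 there exist scalars ξ_{n,i} (0 ≤ i ≤ ⌊n/2⌋) with f_n(t) = Σ_{i=0}^{⌊n/2⌋} ξ_{n,i} t^i (1+t)^{n−2i}, then for every n ≥ 0 one has h_n(t) = Σ_{i=0}^{⌊n/2⌋} ( Σ_{k=2i}^n C(n,k) ξ_{k,i} ) t^i (1+t)^{n−2i}. In particular, if all ξ_{n,i} are nonnegative, then each h_n(t) is γ-positive with center n/2. -/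
open Polynomial Finset

private lemma tri1 {M : Type*} [AddCommMonoid M] (n : ℕ) (F : ℕ → ℕ → M) :
    ∑ m ∈ range (n+1), ∑ k ∈ range (m+1), F m k = ∑ k ∈ range (n+1), ∑ m ∈ Icc k n, F m k := by
  have h1 : ∀ m ∈ range (n+1), ∑ k ∈ range (m+1), F m k
      = ∑ k ∈ range (n+1), if k ≤ m then F m k else 0 := by
    intro m hm
    rw [← Finset.sum_filter]
    apply Finset.sum_congr _ (fun _ _ => rfl)
    ext k; simp only [mem_filter, mem_range] at hm ⊢; omega
  rw [Finset.sum_congr rfl h1, Finset.sum_comm]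
  refine Finset.sum_congr rfl fun k hk => ?_
  rw [← Finset.sum_filter]
  apply Finset.sum_congr _ (fun _ _ => rfl)
  ext m; simp only [mem_filter, mem_range, mem_Icc]; omega

private lemma tri2 {M : Type*} [AddCommMonoid M] (n : ℕ) (F : ℕ → ℕ → M) :
    ∑ k ∈ range (n+1), ∑ i ∈ range (k/2+1), F k i
      = ∑ i ∈ range (n/2+1), ∑ k ∈ Icc (2*i) n, F k i := by
  have h1 : ∀ k ∈ range (n+1), ∑ i ∈ range (k/2+1), F k i
      = ∑ i ∈ range (n/2+1), if 2*i ≤ k then F k i else 0 := by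
    intro k hk
    rw [← Finset.sum_filter]
    apply Finset.sum_congr _ (fun _ _ => rfl)
    ext i; simp only [mem_filter, mem_range] at hk ⊢; omega
  rw [Finset.sum_congr rfl h1, Finset.sum_comm]
  refine Finset.sum_congr rfl fun i hi => ?_
  rw [← Finset.sum_filter]
  apply Finset.sum_congr _ (fun _ _ => rfl)
  ext k; simp only [mem_filter, mem_range, mem_Icc]; omega

private lemma bcg_inner_sum (n k : ℕ) (hk : k ≤ n) :
    ∑ m ∈ Icc k n, ((n.choose m * m.choose k : ℕ) : ℝ[X]) * X ^ (n - m)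
      = (n.choose k : ℝ[X]) * (1 + X) ^ (n - k) := by
  have h1 : ∀ m ∈ Icc k n, ((n.choose m * m.choose k : ℕ) : ℝ[X]) * X ^ (n - m)
      = (n.choose k : ℝ[X]) * (((n-k).choose (m-k) : ℝ[X]) * X ^ (n - m)) := by
    intro m hm
    rw [mem_Icc] at hm
    rw [Nat.choose_mul hm.1]
    push_cast
    ring
  rw [Finset.sum_congr rfl h1, ← Finset.mul_sum]
  congr 1
  rw [← Finset.Ico_add_one_right_eq_Icc, Finset.sum_Ico_eq_sum_range]
  have h2 : n + 1 - k = (n - k) + 1 := by omega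
  rw [h2]
  have h3 : ∀ j ∈ range ((n-k)+1), ((n-k).choose ((k+j)-k) : ℝ[X]) * X ^ (n - (k+j))
      = X ^ ((n-k) - j) * ((n-k).choose j : ℝ[X]) := by
    intro j hj
    rw [mem_range] at hj
    have : (k+j) - k = j := by omega
    have h4 : n - (k+j) = (n-k) - j := by omega
    rw [this, h4, mul_comm]
  rw [Finset.sum_congr rfl h3]
  rw [add_pow (1 : ℝ[X]) X (n-k)]
  refine Finset.sum_congr rfl fun j hj => ?_
  rw [one_pow, one_mul]

/-- If `h n = Σ_m C(n,m) t^{n−m} g m`, `g m = Σ_k C(m,k) f k`, and each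
`f n` has an expansion `f n = Σ_i ξ_{n,i} t^i (1+t)^{n−2i}`, then
`h n = Σ_i (Σ_{k=2i}^n C(n,k) ξ_{k,i}) t^i (1+t)^{n−2i}`; in particular, if all `ξ_{n,i}`
are nonnegative then each `h n` is γ-positive with center `n/2`. -/
theorem binomial_compose_gamma {f g h : ℕ → ℝ[X]} (ξ : ℕ → ℕ → ℝ)
    (hgh : ∀ n, h n = ∑ m ∈ range (n + 1), (n.choose m : ℝ[X]) * X ^ (n - m) * g m)
    (hfg : ∀ m, g m = ∑ k ∈ range (m + 1), (m.choose k : ℝ[X]) * f k)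
    (hf : ∀ n, f n = ∑ i ∈ range (n / 2 + 1), C (ξ n i) * X ^ i * (1 + X) ^ (n - 2 * i)) :
    (∀ n, h n = ∑ i ∈ range (n / 2 + 1),
        C (∑ k ∈ Icc (2 * i) n, (n.choose k : ℝ) * ξ k i) * X ^ i * (1 + X) ^ (n - 2 * i)) ∧
    ((∀ n i, 0 ≤ ξ n i) → ∀ n, ∃ γ : ℕ → ℝ, (∀ i, 0 ≤ γ i) ∧
        h n = ∑ i ∈ range (n / 2 + 1), C (γ i) * X ^ i * (1 + X) ^ (n - 2 * i)) := by
  have main : ∀ n, h n = ∑ i ∈ range (n / 2 + 1),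
      C (∑ k ∈ Icc (2 * i) n, (n.choose k : ℝ) * ξ k i) * X ^ i * (1 + X) ^ (n - 2 * i) := by
    intro n
    have step1 : h n = ∑ k ∈ range (n+1), (n.choose k : ℝ[X]) * (1 + X) ^ (n - k) * f k := by
      rw [hgh n]
      have : ∀ m ∈ range (n+1), (n.choose m : ℝ[X]) * X ^ (n - m) * g m
          = ∑ k ∈ range (m+1), ((n.choose m * m.choose k : ℕ) : ℝ[X]) * X ^ (n-m) * f k := by
        intro m hm
        rw [hfg m, Finset.mul_sum]
        refine Finset.sum_congr rfl fun k hk => ?_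
        push_cast
        ring
      rw [Finset.sum_congr rfl this,
        tri1 n (fun m k => ((n.choose m * m.choose k : ℕ) : ℝ[X]) * X ^ (n-m) * f k)]
      refine Finset.sum_congr rfl fun k hk => ?_
      rw [mem_range] at hk
      rw [← Finset.sum_mul, bcg_inner_sum n k (by omega)]
    rw [step1]
    have step2 : ∀ k ∈ range (n+1), (n.choose k : ℝ[X]) * (1 + X) ^ (n - k) * f k
        = ∑ i ∈ range (k/2+1),
            (n.choose k : ℝ[X]) * C (ξ k i) * X ^ i * (1 + X) ^ (n - 2*i) := by
      intro k hk
      rw [mem_range] at hk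
      rw [hf k, Finset.mul_sum]
      refine Finset.sum_congr rfl fun i hi => ?_
      rw [mem_range] at hi
      have e : (n - k) + (k - 2*i) = n - 2*i := by omega
      calc (n.choose k : ℝ[X]) * (1 + X) ^ (n - k) * (C (ξ k i) * X ^ i * (1 + X) ^ (k - 2*i))
          = (n.choose k : ℝ[X]) * C (ξ k i) * X ^ i
              * ((1 + X) ^ (n - k) * (1 + X) ^ (k - 2*i)) := by ring
        _ = _ := by rw [← pow_add, e]
    rw [Finset.sum_congr rfl step2,
      tri2 n (fun k i => (n.choose k : ℝ[X]) * C (ξ k i) * X ^ i * (1 + X) ^ (n - 2*i))]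
    refine Finset.sum_congr rfl fun i hi => ?_
    rw [← Finset.sum_mul, ← Finset.sum_mul, map_sum]
    congr 2
    · refine Finset.sum_congr rfl fun k hk => ?_
      rw [C_mul, ← C_eq_natCast]
  refine ⟨main, fun hξ n => ⟨fun i => ∑ k ∈ Icc (2 * i) n, (n.choose k : ℝ) * ξ k i,
    fun i => Finset.sum_nonneg fun k _ => mul_nonneg (Nat.cast_nonneg _) (hξ k i), main n⟩⟩
end

section
/- For all positive integers n and r, the following identity of formal power series in ℤ[[t]] holds: Σ_{w ∈ (ℤ_r≀S_n)⁺} t^{des(w)} = (1−t)^n · Σ_{k≥0} ((rk+1)^n − (rk)^n) t^k, where (ℤ_r≀S_n)⁺ is the set of w = (σ,ε) ∈ ℤ_r ≀ S_n with ε_1 = 0. -/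
open Polynomial Finset

/-- An `r`-colored permutation of `[n] = {1,…,n}`: a pair `(σ, ε)` of a permutation `σ`
of `[n]` and a color vector `ε ∈ {0,…,r−1}ⁿ`; the set of these is `ℤ_r ≀ S_n`. -/
abbrev ColoredPerm (n r : ℕ) := Equiv.Perm (Fin n) × (Fin n → Fin r)

/-- The (1-based) value `σ(k) ∈ [n]` of a permutation of `[n]` at position `k ∈ [n]`,
with the convention `σ(k) = n+1` for positions outside `[1,n]`. -/
def sVal {n : ℕ} (σ : Equiv.Perm (Fin n)) (k : ℕ) : ℕ :=
  if h : 1 ≤ k ∧ k ≤ n then (σ ⟨k - 1, by omega⟩ : ℕ) + 1 else n + 1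

/-- The (1-based) color `ε_k` at position `k ∈ [n]`, with the convention `ε_k = 0`
for positions outside `[1,n]`. -/
def eVal {n r : ℕ} (ε : Fin n → Fin r) (k : ℕ) : ℕ :=
  if h : 1 ≤ k ∧ k ≤ n then (ε ⟨k - 1, by omega⟩ : ℕ) else 0

/-- The descent set `Des(w) ⊆ [n]` of an `r`-colored permutation `w = (σ, ε)`:
`k ∈ [n]` is a descent if `ε_k > ε_{k+1}`, or `ε_k = ε_{k+1}` and `σ(k) > σ(k+1)`,
with the conventions `σ(n+1) = n+1` and `ε_{n+1} = 0`. -/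
def desSet {n r : ℕ} (w : ColoredPerm n r) : Finset ℕ :=
  (Finset.Icc 1 n).filter fun k =>
    eVal w.2 (k + 1) < eVal w.2 k ∨
      (eVal w.2 k = eVal w.2 (k + 1) ∧ sVal w.1 (k + 1) < sVal w.1 k)

/-- The ascent set `Asc(w) = [n] ∖ Des(w)`. -/
def ascSet {n r : ℕ} (w : ColoredPerm n r) : Finset ℕ :=
  Finset.Icc 1 n \ desSet w

/-- The excedance set of `w = (σ, ε)`: the set of `k ∈ [n]` with `σ(k) > k`, or
`σ(k) = k` and `ε_k ≠ 0`. -/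
def excSet {n r : ℕ} (w : ColoredPerm n r) : Finset ℕ :=
  (Finset.Icc 1 n).filter fun k => k < sVal w.1 k ∨ (sVal w.1 k = k ∧ eVal w.2 k ≠ 0)

/-- The colored Eulerian polynomial `A_{n,r}(t) = Σ_{w ∈ ℤ_r≀S_n} t^{des(w)}`
(with `A_{0,r}(t) = 1`). -/
noncomputable def colEulerian (n r : ℕ) : ℤ[X] :=
  ∑ w : ColoredPerm n r, X ^ (desSet w).card

/-- The colored binomial Eulerian polynomial
`Ã_{n,r}(t) = Σ_{m=0}^n C(n,m) t^{n−m} A_{m,r}(t)`. -/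
noncomputable def colBinomEulerian (n r : ℕ) : ℤ[X] :=
  ∑ m ∈ range (n + 1), (n.choose m : ℤ[X]) * X ^ (n - m) * colEulerian m r

open scoped Classical in
/-- `(ℤ_r≀S_n)⁺`: the set of colored permutations `w = (σ, ε)` with `ε_1 = 0`. -/
noncomputable def plusSet (n r : ℕ) : Finset (ColoredPerm n r) :=
  Finset.univ.filter fun w => eVal w.2 1 = 0

namespace PS10

variable {m r : ℕ}

lemma eVal_pos {ε : Fin (m+1) → Fin r} {k : ℕ} (h1 : 1 ≤ k) (h2 : k ≤ m + 1) :
    eVal ε k = (ε ⟨k - 1, by omega⟩ : ℕ) := dif_pos ⟨h1, h2⟩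

lemma eVal_neg {ε : Fin (m+1) → Fin r} {k : ℕ} (h : m + 1 < k) :
    eVal ε k = 0 := dif_neg (by omega)

lemma sVal_pos {σ : Equiv.Perm (Fin (m+1))} {k : ℕ} (h1 : 1 ≤ k) (h2 : k ≤ m + 1) :
    sVal σ k = (σ ⟨k - 1, by omega⟩ : ℕ) + 1 := dif_pos ⟨h1, h2⟩

lemma sVal_neg {σ : Equiv.Perm (Fin (m+1))} {k : ℕ} (h : m + 1 < k) :
    sVal σ k = m + 2 := dif_neg (by omega)

/-- 0-based descent predicate. -/
def dsc (w : ColoredPerm (m + 1) r) (i : Fin (m + 1)) : Prop :=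
  if h : (i : ℕ) < m then
    (w.2 ⟨i + 1, by omega⟩ < w.2 i ∨
      (w.2 i = w.2 ⟨i + 1, by omega⟩ ∧ w.1 ⟨i + 1, by omega⟩ < w.1 i))
  else 0 < (w.2 i : ℕ)

instance (w : ColoredPerm (m + 1) r) : DecidablePred (dsc w) := fun i => by
  unfold dsc; infer_instance

lemma dsc_castSucc (w : ColoredPerm (m + 1) r) (i : Fin m) :
    dsc w i.castSucc ↔
      (w.2 i.succ < w.2 i.castSucc ∨
        (w.2 i.castSucc = w.2 i.succ ∧ w.1 i.succ < w.1 i.castSucc)) := by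
  have h : ((i.castSucc : Fin (m+1)) : ℕ) < m := i.isLt
  have hs : (⟨(i.castSucc : ℕ) + 1, by omega⟩ : Fin (m+1)) = i.succ := by
    apply Fin.ext; simp
  rw [dsc, dif_pos h, hs]

lemma dsc_last (w : ColoredPerm (m + 1) r) :
    dsc w (Fin.last m) ↔ 0 < (w.2 (Fin.last m) : ℕ) := by
  rw [dsc, dif_neg (by simp)]

/-- Number of (0-based) descents at positions `< j`. -/
def D (w : ColoredPerm (m + 1) r) (j : ℕ) : ℕ :=
  (univ.filter fun i : Fin (m + 1) => (i : ℕ) < j ∧ dsc w i).card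

lemma D_zero (w : ColoredPerm (m + 1) r) : D w 0 = 0 := by
  simp [D]

lemma D_mono (w : ColoredPerm (m + 1) r) : Monotone (D w) := by
  intro a b hab
  apply Finset.card_le_card
  intro i hi
  simp only [Finset.mem_filter, Finset.mem_univ, true_and] at *
  exact ⟨by omega, hi.2⟩

lemma D_succ (w : ColoredPerm (m + 1) r) (j : ℕ) (hj : j < m + 1) :
    D w (j + 1) = D w j + if dsc w ⟨j, hj⟩ then 1 else 0 := by
  classical
  have hsplit : (univ.filter fun i : Fin (m + 1) => (i : ℕ) < j + 1 ∧ dsc w i)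
      = (univ.filter fun i : Fin (m + 1) => (i : ℕ) < j ∧ dsc w i) ∪
        (univ.filter fun i : Fin (m + 1) => i = ⟨j, hj⟩ ∧ dsc w i) := by
    ext i
    simp only [Finset.mem_filter, Finset.mem_union, Finset.mem_univ, true_and]
    constructor
    · rintro ⟨h1, h2⟩
      rcases Nat.lt_succ_iff_lt_or_eq.mp h1 with h | h
      · exact Or.inl ⟨h, h2⟩
      · exact Or.inr ⟨Fin.ext h, h2⟩
    · rintro (⟨h1, h2⟩ | ⟨h1, h2⟩)
      · exact ⟨by omega, h2⟩
      · subst h1; exact ⟨by simp, h2⟩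
  have hdisj : Disjoint (univ.filter fun i : Fin (m + 1) => (i : ℕ) < j ∧ dsc w i)
      (univ.filter fun i : Fin (m + 1) => i = ⟨j, hj⟩ ∧ dsc w i) := by
    rw [Finset.disjoint_filter]
    rintro i _ ⟨h1, _⟩ ⟨rfl, _⟩
    simp at h1
  rw [D, hsplit, Finset.card_union_of_disjoint hdisj]
  congr 1
  by_cases h : dsc w ⟨j, hj⟩
  · rw [if_pos h, Finset.card_eq_one]
    refine ⟨⟨j, hj⟩, ?_⟩
    ext i
    simp only [Finset.mem_filter, Finset.mem_univ, true_and, Finset.mem_singleton]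
    constructor
    · rintro ⟨rfl, _⟩; rfl
    · rintro rfl; exact ⟨rfl, h⟩
  · rw [if_neg h, Finset.card_eq_zero, Finset.eq_empty_iff_forall_notMem]
    intro i hi
    simp only [Finset.mem_filter, Finset.mem_univ, true_and] at hi
    obtain ⟨rfl, h2⟩ := hi
    exact h h2

def des0 (w : ColoredPerm (m + 1) r) : ℕ := D w (m + 1)

lemma des0_eq (w : ColoredPerm (m + 1) r) :
    des0 w = D w m + if dsc w (Fin.last m) then 1 else 0 := by
  rw [des0, D_succ w m (by omega)]
  rfl

lemma D_le_des0 (w : ColoredPerm (m + 1) r) (j : ℕ) : D w j ≤ des0 w := by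
  rw [des0, D, D]
  apply Finset.card_le_card
  intro i hi
  simp only [Finset.mem_filter, Finset.mem_univ, true_and] at *
  exact ⟨i.isLt, hi.2⟩

lemma mem_desSet_iff (w : ColoredPerm (m + 1) r) (k : ℕ) (h1 : 1 ≤ k) (h2 : k ≤ m + 1) :
    k ∈ desSet w ↔ dsc w ⟨k - 1, by omega⟩ := by
  rw [desSet, Finset.mem_filter, Finset.mem_Icc]
  rw [eVal_pos h1 h2, sVal_pos h1 h2]
  by_cases hkm : k + 1 ≤ m + 1
  · rw [eVal_pos (by omega) hkm, sVal_pos (by omega) hkm]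
    rw [dsc, dif_pos (show ((⟨k - 1, by omega⟩ : Fin (m+1)) : ℕ) < m by
      simp only [Fin.val_mk]; omega)]
    have e1 : (⟨(k : ℕ) - 1 + 1, by omega⟩ : Fin (m+1)) = ⟨k + 1 - 1, by omega⟩ := by
      apply Fin.ext; simp only [Fin.val_mk]; omega
    rw [e1]
    constructor
    · rintro ⟨_, h | ⟨ha, hb⟩⟩
      · exact Or.inl h
      · exact Or.inr ⟨Fin.ext ha, by rw [Fin.lt_def]; omega⟩
    · rintro (h | ⟨ha, hb⟩)
      · exact ⟨⟨h1, h2⟩, Or.inl h⟩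
      · exact ⟨⟨h1, h2⟩, Or.inr ⟨congrArg Fin.val ha, by
          have := Fin.lt_def.mp hb; omega⟩⟩
  · rw [eVal_neg (by omega), sVal_neg (by omega)]
    rw [dsc, dif_neg (show ¬((⟨k - 1, by omega⟩ : Fin (m+1)) : ℕ) < m by
      simp only [Fin.val_mk]; omega)]
    constructor
    · rintro ⟨_, h | ⟨ha, hb⟩⟩
      · exact h
      · exfalso
        have := (w.1 ⟨k - 1, by omega⟩).isLt
        omega
    · intro h
      exact ⟨⟨h1, h2⟩, Or.inl h⟩

/-- Bridge: the cardinality of `desSet` equals the 0-based descent count. -/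
lemma desSet_card (w : ColoredPerm (m + 1) r) : (desSet w).card = des0 w := by
  classical
  have hdes0 : des0 w = (univ.filter fun i : Fin (m+1) => dsc w i).card := by
    rw [des0, D]; congr 1; ext i
    simp [i.isLt]
    exact fun _ => Nat.lt_succ_iff.mp i.isLt
  rw [hdes0]
  have hmem : ∀ k ∈ desSet w, 1 ≤ k ∧ k ≤ m + 1 := by
    intro k hk
    rw [desSet, Finset.mem_filter, Finset.mem_Icc] at hk
    exact hk.1
  refine Finset.card_bij'
    (i := fun k hk => (⟨k - 1, by have := hmem k hk; omega⟩ : Fin (m+1)))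
    (j := fun i _ => (i : ℕ) + 1) ?hi ?hj ?li ?ri
  case hi =>
    intro k hk
    have h12 := hmem k hk
    simp only [Finset.mem_filter, Finset.mem_univ, true_and]
    exact (mem_desSet_iff w k h12.1 h12.2).mp hk
  case hj =>
    intro i hi
    simp only [Finset.mem_filter, Finset.mem_univ, true_and] at hi
    rw [mem_desSet_iff w ((i : ℕ) + 1) (by omega) (by omega)]
    have : (⟨(i : ℕ) + 1 - 1, by omega⟩ : Fin (m+1)) = i := by
      apply Fin.ext; simp
    rw [this]; exact hi
  case li =>
    intro k hk
    have := hmem k hk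
    simp only [Fin.val_mk]; omega
  case ri =>
    intro i _
    apply Fin.ext; simp

end PS10

namespace PS10

section Forward

variable {m r k : ℕ} (hr : 0 < r)

/-- The colored permutation extracted from `g`. -/
noncomputable def wg (g : Fin (m + 1) → Fin (r * k + 1)) : ColoredPerm (m + 1) r :=
  (Tuple.sort g, fun i => ⟨(g (Tuple.sort g i) : ℕ) % r, Nat.mod_lt _ hr⟩)

/-- The "level" of the `i`-th smallest value of `g`. -/
def mg (g : Fin (m + 1) → Fin (r * k + 1)) (i : Fin (m + 1)) : ℕ :=
  (g (Tuple.sort g i) : ℕ) / r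

/-- The normalized weakly increasing sequence extracted from `g`. -/
noncomputable def cg (g : Fin (m + 1) → Fin (r * k + 1)) (i : Fin (m + 1)) : ℕ :=
  mg g i - D (wg hr g) (i : ℕ)

variable (g : Fin (m + 1) → Fin (r * k + 1))

lemma sort_mono : Monotone (g ∘ (Tuple.sort g)) :=
  ((Tuple.eq_sort_iff (f := g) (σ := Tuple.sort g)).mp rfl).1

lemma sort_ties : ∀ i j, i < j → g (Tuple.sort g i) = g (Tuple.sort g j) →
    Tuple.sort g i < Tuple.sort g j :=
  ((Tuple.eq_sort_iff (f := g) (σ := Tuple.sort g)).mp rfl).2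

lemma mg_mono : Monotone (mg g) := by
  intro a b hab
  exact Nat.div_le_div_right (sort_mono g hab)

lemma wg_snd_val (g : Fin (m + 1) → Fin (r * k + 1)) (i : Fin (m + 1)) :
    ((wg hr g).2 i : ℕ) = (g (Tuple.sort g i) : ℕ) % r := rfl

lemma dvd_decomp (i : Fin (m + 1)) :
    (g (Tuple.sort g i) : ℕ) = r * mg g i + ((wg hr g).2 i : ℕ) := by
  rw [wg_snd_val, mg]
  exact (Nat.div_add_mod _ r).symm

lemma mg_lt_of_dsc (i : Fin m) (hd : dsc (wg hr g) i.castSucc) :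
    mg g i.castSucc < mg g i.succ := by
  have hle : (g (Tuple.sort g i.castSucc) : ℕ) ≤ g (Tuple.sort g i.succ) :=
    sort_mono g (le_of_lt (Fin.castSucc_lt_succ (i := i)))
  have hmle : mg g i.castSucc ≤ mg g i.succ := mg_mono g (le_of_lt (Fin.castSucc_lt_succ (i := i)))
  rcases lt_or_eq_of_le hmle with h | he
  · exact h
  exfalso
  have hdec1 := dvd_decomp hr g i.castSucc
  have hdec2 := dvd_decomp hr g i.succ
  rw [he] at hdec1
  rw [dsc_castSucc] at hd
  rcases hd with h | ⟨h1, h2⟩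
  · -- color drop: mod decreases, but level equal: value decreases, contradiction
    have hmod : ((wg hr g).2 i.succ : ℕ) < ((wg hr g).2 i.castSucc : ℕ) := h
    omega
  · -- equal colors, position drop: values must be equal, contradicting tie-breaking
    have hmod : ((wg hr g).2 i.castSucc : ℕ) = ((wg hr g).2 i.succ : ℕ) :=
      congrArg Fin.val h1
    have hgeq : g (Tuple.sort g i.castSucc) = g (Tuple.sort g i.succ) := by
      apply Fin.ext; omega
    have := sort_ties g i.castSucc i.succ (Fin.castSucc_lt_succ (i := i)) hgeq
    exact absurd this (not_lt.mpr (le_of_lt h2))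

lemma D_le_mg (i : Fin (m + 1)) : D (wg hr g) (i : ℕ) ≤ mg g i := by
  induction i using Fin.induction with
  | zero => simp [D_zero]
  | succ i ih =>
    have hstep : D (wg hr g) ((i : ℕ) + 1)
        = D (wg hr g) (i : ℕ) + if dsc (wg hr g) i.castSucc then 1 else 0 := by
      have := D_succ (wg hr g) (i : ℕ) (by omega)
      rw [this]
      congr 2
    have hv : ((i.succ : Fin (m + 1)) : ℕ) = (i : ℕ) + 1 := rfl
    have hcv : ((i.castSucc : Fin (m + 1)) : ℕ) = (i : ℕ) := rfl
    rw [hv, hstep]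
    by_cases hd : dsc (wg hr g) i.castSucc
    · have := mg_lt_of_dsc hr g i hd
      rw [if_pos hd]
      rw [hcv] at ih
      omega
    · have := mg_mono g (le_of_lt (Fin.castSucc_lt_succ (i := i)))
      rw [if_neg hd]
      rw [hcv] at ih
      omega

end Forward

end PS10

namespace PS10

section ForwardMore

variable {m r k : ℕ} (hr : 0 < r) (g : Fin (m + 1) → Fin (r * k + 1))
include hr

lemma cg_add (i : Fin (m + 1)) : cg hr g i + D (wg hr g) (i : ℕ) = mg g i :=
  Nat.sub_add_cancel (D_le_mg hr g i)

lemma mg_le_k (i : Fin (m + 1)) : mg g i ≤ k := by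
  have h1 : (g (Tuple.sort g i) : ℕ) ≤ r * k := by
    have := (g (Tuple.sort g i)).isLt; omega
  calc mg g i = (g (Tuple.sort g i) : ℕ) / r := rfl
    _ ≤ (r * k) / r := Nat.div_le_div_right h1
    _ = k := Nat.mul_div_cancel_left k hr

lemma mg_lt_k_of_dsc_last (hd : dsc (wg hr g) (Fin.last m)) : mg g (Fin.last m) < k := by
  rw [dsc_last, wg_snd_val] at hd
  have h1 : (g (Tuple.sort g (Fin.last m)) : ℕ) ≤ r * k := by
    have := (g (Tuple.sort g (Fin.last m))).isLt; omega
  have h2 : (g (Tuple.sort g (Fin.last m)) : ℕ) < r * k := by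
    rcases lt_or_eq_of_le h1 with h | h
    · exact h
    · rw [h] at hd
      simp [Nat.mul_mod_right] at hd
  rw [mg, Nat.div_lt_iff_lt_mul hr, Nat.mul_comm k r]
  omega

lemma cg_mono : Monotone (cg hr g) := by
  rw [Fin.monotone_iff_le_succ]
  intro i
  have hstep : D (wg hr g) ((i : ℕ) + 1)
      = D (wg hr g) (i : ℕ) + if dsc (wg hr g) i.castSucc then 1 else 0 := by
    rw [D_succ (wg hr g) (i : ℕ) (by omega)]; congr 2
  have h1 := cg_add hr g i.castSucc
  have h2 := cg_add hr g i.succ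
  have hcv : ((i.castSucc : Fin (m + 1)) : ℕ) = (i : ℕ) := rfl
  have hv : ((i.succ : Fin (m + 1)) : ℕ) = (i : ℕ) + 1 := rfl
  rw [hcv] at h1; rw [hv, hstep] at h2
  by_cases hd : dsc (wg hr g) i.castSucc
  · have := mg_lt_of_dsc hr g i hd
    rw [if_pos hd] at h2; omega
  · have := mg_mono g (le_of_lt (Fin.castSucc_lt_succ (i := i)))
    rw [if_neg hd] at h2; omega

lemma cg_last : cg hr g (Fin.last m) + des0 (wg hr g) ≤ k := by
  have h1 := cg_add hr g (Fin.last m)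
  have hlv : ((Fin.last m : Fin (m + 1)) : ℕ) = m := rfl
  rw [hlv] at h1
  rw [des0_eq]
  by_cases hd : dsc (wg hr g) (Fin.last m)
  · have := mg_lt_k_of_dsc_last hr g hd
    rw [if_pos hd]; omega
  · have := mg_le_k hr g (Fin.last m)
    rw [if_neg hd]; omega

lemma sort_zero_min (j : Fin (m + 1)) :
    (g (Tuple.sort g 0) : ℕ) ≤ (g j : ℕ) := by
  have : g j = (g ∘ Tuple.sort g) ((Tuple.sort g).symm j) := by
    simp
  rw [this]
  exact sort_mono g (Fin.zero_le _)

lemma exists_zero_iff :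
    (∃ j, g j = 0) ↔ (g (Tuple.sort g 0) : ℕ) = 0 := by
  constructor
  · rintro ⟨j, hj⟩
    have := sort_zero_min hr g j
    rw [hj] at this
    simpa using this
  · intro h
    exact ⟨Tuple.sort g 0, Fin.ext (by simpa using h)⟩

lemma wg_mem_plus (hz : ∃ j, g j = 0) : wg hr g ∈ plusSet (m + 1) r := by
  classical
  rw [plusSet, Finset.mem_filter]
  refine ⟨Finset.mem_univ _, ?_⟩
  rw [eVal_pos (le_refl 1) (by omega)]
  have h0 : (⟨1 - 1, by omega⟩ : Fin (m + 1)) = 0 := by apply Fin.ext; simp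
  rw [h0, wg_snd_val]
  have := (exists_zero_iff hr g).mp hz
  rw [this]
  exact Nat.zero_mod r

lemma cg_zero (hz : ∃ j, g j = 0) : cg hr g 0 = 0 := by
  have h1 : mg g 0 = 0 := by
    rw [mg, (exists_zero_iff hr g).mp hz]
    exact Nat.zero_div r
  have := cg_add hr g 0
  have h0 : ((0 : Fin (m + 1)) : ℕ) = 0 := rfl
  omega

end ForwardMore

section Backward

variable {m r k : ℕ} (hr : 0 < r) (w : ColoredPerm (m + 1) r) (c : Fin (m + 1) → Fin (k + 1))

/-- colors are zero where the normalized sequence is maximal -/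
lemma color_zero (hc : Monotone c) (hck : (c (Fin.last m) : ℕ) + des0 w ≤ k) :
    ∀ i : Fin (m + 1), (c i : ℕ) + D w (i : ℕ) = k → (w.2 i : ℕ) = 0 := by
  have tB : ∀ i : Fin (m + 1),
      (c i : ℕ) + D w (i : ℕ) + (if dsc w (Fin.last m) then 1 else 0) ≤ k := by
    intro i
    have h1 : (c i : ℕ) ≤ (c (Fin.last m) : ℕ) := hc (Fin.le_last i)
    have h2 : D w (i : ℕ) + (if dsc w (Fin.last m) then 1 else 0) ≤ des0 w := by
      rw [des0_eq]
      have : D w (i : ℕ) ≤ D w m := D_mono w (by omega)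
      omega
    omega
  intro i
  induction i using Fin.reverseInduction with
  | last =>
    intro hlast
    have := tB (Fin.last m)
    rw [hlast] at this
    have hnd : ¬ dsc w (Fin.last m) := by
      intro hd; rw [if_pos hd] at this; omega
    rw [dsc_last] at hnd
    omega
  | cast i ih =>
    intro hcast
    have hcv : ((i.castSucc : Fin (m + 1)) : ℕ) = (i : ℕ) := rfl
    have hv : ((i.succ : Fin (m + 1)) : ℕ) = (i : ℕ) + 1 := rfl
    have hstep : D w ((i : ℕ) + 1) = D w (i : ℕ) + if dsc w i.castSucc then 1 else 0 := by
      rw [D_succ w (i : ℕ) (by omega)]; congr 2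
    have hcle : (c i.castSucc : ℕ) ≤ (c i.succ : ℕ) :=
      hc (le_of_lt (Fin.castSucc_lt_succ (i := i)))
    have hsucc_le := tB i.succ
    rw [hv, hstep] at hsucc_le
    rw [hcv] at hcast
    -- t is monotone and bounded by k, so t i.succ = k and no descent at i.castSucc
    have hnd : ¬ dsc w i.castSucc := by
      intro hd
      rw [if_pos hd] at hsucc_le
      omega
    have hteq : (c i.succ : ℕ) + D w ((i : ℕ) + 1) = k := by
      rw [hstep, if_neg hnd]
      omega
    have hsz : (w.2 i.succ : ℕ) = 0 := by
      apply ih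
      rw [hv]; exact hteq
    rw [dsc_castSucc] at hnd
    push_neg at hnd
    have h9 := hnd.1
    rw [Fin.le_def] at h9
    omega

lemma val_bound (hc : Monotone c) (hck : (c (Fin.last m) : ℕ) + des0 w ≤ k) :
    ∀ i : Fin (m + 1), r * ((c i : ℕ) + D w (i : ℕ)) + (w.2 i : ℕ) ≤ r * k := by
  intro i
  have htk : (c i : ℕ) + D w (i : ℕ) ≤ k := by
    have h1 : (c i : ℕ) ≤ (c (Fin.last m) : ℕ) := hc (Fin.le_last i)
    have h2 : D w (i : ℕ) ≤ des0 w := D_le_des0 w _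
    omega
  rcases lt_or_eq_of_le htk with h | h
  · have h1 : r * ((c i : ℕ) + D w (i : ℕ) + 1) ≤ r * k := Nat.mul_le_mul_left r h
    have h2 : (w.2 i : ℕ) < r := (w.2 i).isLt
    rw [Nat.mul_succ] at h1
    omega
  · rw [h, color_zero w c hc hck i h]
    omega

/-- The inverse map: reconstructing `g` from `(w, c)`. -/
def gb : Fin (m + 1) → Fin (r * k + 1) := fun j =>
  ⟨min (r * ((c (w.1.symm j) : ℕ) + D w ((w.1.symm j : Fin (m+1)) : ℕ)) + (w.2 (w.1.symm j) : ℕ))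
    (r * k), by omega⟩

lemma gb_val (hc : Monotone c) (hck : (c (Fin.last m) : ℕ) + des0 w ≤ k) (i : Fin (m + 1)) :
    (gb w c (w.1 i) : ℕ) = r * ((c i : ℕ) + D w (i : ℕ)) + (w.2 i : ℕ) := by
  unfold gb
  simp only [Equiv.symm_apply_apply]
  exact min_eq_left (val_bound w c hc hck i)

end Backward

end PS10

namespace PS10

section Backward2

variable {m r k : ℕ} (hr : 0 < r) (w : ColoredPerm (m + 1) r) (c : Fin (m + 1) → Fin (k + 1))
include hr
set_option linter.unusedSectionVars false

lemma decomp_unique {a b e f : ℕ} (he : e < r) (hf : f < r)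
    (h : r * a + e = r * b + f) : a = b ∧ e = f := by
  have h1 : (r * a + e) / r = a := by
    rw [Nat.mul_add_div hr, Nat.div_eq_of_lt he]
    omega
  have h2 : (r * b + f) / r = b := by
    rw [Nat.mul_add_div hr, Nat.div_eq_of_lt hf]
    omega
  have hab : a = b := by rw [← h1, ← h2, h]
  subst hab
  exact ⟨rfl, by omega⟩

lemma gb_comp_mono (hc : Monotone c) (hck : (c (Fin.last m) : ℕ) + des0 w ≤ k) :
    Monotone (fun i => (gb w c (w.1 i) : ℕ)) := by
  rw [Fin.monotone_iff_le_succ]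
  intro i
  try dsimp only
  rw [gb_val w c hc hck, gb_val w c hc hck]
  have hcv : ((i.castSucc : Fin (m + 1)) : ℕ) = (i : ℕ) := rfl
  have hv : ((i.succ : Fin (m + 1)) : ℕ) = (i : ℕ) + 1 := rfl
  have hstep : D w ((i : ℕ) + 1) = D w (i : ℕ) + if dsc w i.castSucc then 1 else 0 := by
    rw [D_succ w (i : ℕ) (by omega)]; congr 2
  have hcle : (c i.castSucc : ℕ) ≤ (c i.succ : ℕ) := hc (le_of_lt (Fin.castSucc_lt_succ (i := i)))
  rw [hcv, hv, hstep]
  by_cases hd : dsc w i.castSucc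
  · rw [if_pos hd]
    have h1 : r * ((c i.castSucc : ℕ) + D w (i : ℕ) + 1)
        ≤ r * ((c i.succ : ℕ) + (D w (i : ℕ) + 1)) :=
      Nat.mul_le_mul_left r (by omega)
    have h2 : (w.2 i.castSucc : ℕ) < r := (w.2 i.castSucc).isLt
    rw [Nat.mul_succ] at h1
    omega
  · rw [if_neg hd]
    have hnd := hd
    rw [dsc_castSucc] at hnd
    push_neg at hnd
    have hε : (w.2 i.castSucc : ℕ) ≤ (w.2 i.succ : ℕ) := by
      have h9 := hnd.1; rw [Fin.le_def] at h9; exact h9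
    have h1 : r * ((c i.castSucc : ℕ) + D w (i : ℕ))
        ≤ r * ((c i.succ : ℕ) + (D w (i : ℕ) + 0)) :=
      Nat.mul_le_mul_left r (by omega)
    omega

lemma gb_ties_adj (hc : Monotone c) (hck : (c (Fin.last m) : ℕ) + des0 w ≤ k) (i : Fin m)
    (hval : (gb w c (w.1 i.castSucc) : ℕ) = (gb w c (w.1 i.succ) : ℕ)) :
    w.1 i.castSucc < w.1 i.succ := by
  rw [gb_val w c hc hck, gb_val w c hc hck] at hval
  have hu := decomp_unique hr (w.2 i.castSucc).isLt (w.2 i.succ).isLt hval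
  have hcv : ((i.castSucc : Fin (m + 1)) : ℕ) = (i : ℕ) := rfl
  have hv : ((i.succ : Fin (m + 1)) : ℕ) = (i : ℕ) + 1 := rfl
  have hstep : D w ((i : ℕ) + 1) = D w (i : ℕ) + if dsc w i.castSucc then 1 else 0 := by
    rw [D_succ w (i : ℕ) (by omega)]; congr 2
  have hcle : (c i.castSucc : ℕ) ≤ (c i.succ : ℕ) := hc (le_of_lt (Fin.castSucc_lt_succ (i := i)))
  have hnd : ¬ dsc w i.castSucc := by
    intro hd
    have h1 := hu.1
    rw [hcv, hv, hstep, if_pos hd] at h1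
    omega
  rw [dsc_castSucc] at hnd
  have hnd' := not_or.mp hnd
  have hεeq : w.2 i.castSucc = w.2 i.succ := Fin.ext hu.2
  have hle : ¬ (w.1 i.succ < w.1 i.castSucc) := fun hlt => hnd'.2 ⟨hεeq, hlt⟩
  have hne : w.1 i.castSucc ≠ w.1 i.succ :=
    fun he => (Fin.castSucc_lt_succ (i := i)).ne (w.1.injective he)
  exact lt_of_le_of_ne (le_of_not_gt hle) hne

lemma gb_ties (hc : Monotone c) (hck : (c (Fin.last m) : ℕ) + des0 w ≤ k) :
    ∀ i j : Fin (m + 1), i < j → gb w c (w.1 i) = gb w c (w.1 j) → w.1 i < w.1 j := by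
  have adj : ∀ i j : Fin (m + 1), (j : ℕ) = (i : ℕ) + 1 →
      (gb w c (w.1 i) : ℕ) = (gb w c (w.1 j) : ℕ) → w.1 i < w.1 j := by
    intro i j hj hval
    have him : (i : ℕ) < m := by have := j.isLt; omega
    have e1 : i = (⟨(i : ℕ), him⟩ : Fin m).castSucc := Fin.ext rfl
    have e2 : j = (⟨(i : ℕ), him⟩ : Fin m).succ := Fin.ext (by
      simp only [Fin.val_succ, Fin.val_mk]; omega)
    rw [e1, e2] at hval ⊢
    exact gb_ties_adj hr w c hc hck _ hval
  have key : ∀ d : ℕ, ∀ i j : Fin (m + 1), (j : ℕ) = (i : ℕ) + (d + 1) →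
      (gb w c (w.1 i) : ℕ) = (gb w c (w.1 j) : ℕ) → w.1 i < w.1 j := by
    intro d
    induction d with
    | zero => exact fun i j hj hval => adj i j (by omega) hval
    | succ d ih =>
      intro i j hj hval
      have hj' : (i : ℕ) + (d + 1) < m + 1 := by have := j.isLt; omega
      set j' : Fin (m + 1) := ⟨(i : ℕ) + (d + 1), hj'⟩ with hj'def
      have hij' : i ≤ j' := by rw [Fin.le_def, hj'def]; simp only [Fin.val_mk]; omega
      have hj'j : j' ≤ j := by rw [Fin.le_def, hj'def]; simp only [Fin.val_mk]; omega
      have m1 := gb_comp_mono hr w c hc hck hij'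
      dsimp only at m1
      have m2 := gb_comp_mono hr w c hc hck hj'j
      dsimp only at m2
      have e1 : (gb w c (w.1 i) : ℕ) = (gb w c (w.1 j') : ℕ) := by omega
      have e2 : (gb w c (w.1 j') : ℕ) = (gb w c (w.1 j) : ℕ) := by omega
      exact lt_trans (ih i j' rfl e1) (adj j' j (by rw [hj'def]; simp only [Fin.val_mk]; omega) e2)
  intro i j hij hval
  have hd : (j : ℕ) = (i : ℕ) + (((j : ℕ) - (i : ℕ) - 1) + 1) := by
    have := Fin.lt_def.mp hij; omega
  exact key _ i j hd (congrArg Fin.val hval)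

lemma gb_sort (hc : Monotone c) (hck : (c (Fin.last m) : ℕ) + des0 w ≤ k) :
    Tuple.sort (gb w c) = w.1 := by
  symm
  rw [Tuple.eq_sort_iff]
  constructor
  · intro a b hab
    have h9 := gb_comp_mono hr w c hc hck hab
    dsimp only at h9
    rw [Fin.le_def]
    exact h9
  · exact gb_ties hr w c hc hck

lemma gb_wg (hc : Monotone c) (hck : (c (Fin.last m) : ℕ) + des0 w ≤ k) :
    wg hr (gb w c) = w := by
  have hs := gb_sort hr w c hc hck
  have h2 : (wg hr (gb w c)).2 = w.2 := by
    funext i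
    apply Fin.ext
    rw [wg_snd_val hr, hs, gb_val w c hc hck, Nat.mul_add_mod]
    exact Nat.mod_eq_of_lt (w.2 i).isLt
  exact Prod.ext_iff.mpr ⟨hs, h2⟩

lemma cg_gb (hc : Monotone c) (hck : (c (Fin.last m) : ℕ) + des0 w ≤ k) (i : Fin (m + 1)) :
    cg hr (gb w c) i = (c i : ℕ) := by
  have hw := gb_wg hr w c hc hck
  have hs := gb_sort hr w c hc hck
  have hm : mg (gb w c) i = (c i : ℕ) + D w (i : ℕ) := by
    rw [mg, hs, gb_val w c hc hck, Nat.mul_add_div hr,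
      Nat.div_eq_of_lt (w.2 i).isLt]
    omega
  unfold cg
  rw [hw, hm]
  omega

/-- normalized sequence of `g`, as a `Fin (k+1)`-valued function -/
noncomputable def toC (g : Fin (m + 1) → Fin (r * k + 1)) : Fin (m + 1) → Fin (k + 1) := fun i =>
  ⟨cg hr g i, by
    have h1 := cg_add hr g i
    have h2 := mg_le_k hr g i
    omega⟩

lemma gb_toC (g : Fin (m + 1) → Fin (r * k + 1)) : gb (wg hr g) (toC hr g) = g := by
  funext j
  apply Fin.ext
  show min (r * ((toC hr g ((wg hr g).1.symm j) : ℕ)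
      + D (wg hr g) (((wg hr g).1.symm j : Fin (m + 1)) : ℕ))
      + ((wg hr g).2 ((wg hr g).1.symm j) : ℕ)) (r * k) = (g j : ℕ)
  have hσ : (wg hr g).1 = Tuple.sort g := rfl
  set i : Fin (m + 1) := (Tuple.sort g).symm j with hidef
  have hji : Tuple.sort g i = j := by rw [hidef]; exact (Tuple.sort g).apply_symm_apply j
  have ht : (toC hr g i : ℕ) = cg hr g i := rfl
  rw [hσ, ht, cg_add hr g i, ← dvd_decomp hr g i, hji]
  apply min_eq_left
  have := (g j).isLt
  omega

end Backward2

end PS10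

namespace PS10

section Count

variable {m r : ℕ} (hr : 0 < r)

open scoped Classical in
/-- The set of normalized sequences attached to a colored permutation `w`. -/
noncomputable def Cset (w : ColoredPerm (m + 1) r) (k : ℕ) :
    Finset (Fin (m + 1) → Fin (k + 1)) :=
  univ.filter fun c => Monotone c ∧ c 0 = 0 ∧ (c (Fin.last m) : ℕ) + des0 w ≤ k

include hr
set_option linter.unusedSectionVars false

lemma plus_color_zero (w : ColoredPerm (m + 1) r) (hw : w ∈ plusSet (m + 1) r) :
    (w.2 0 : ℕ) = 0 := by
  classical
  rw [plusSet, Finset.mem_filter] at hw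
  have h := hw.2
  rw [eVal_pos (le_refl 1) (by omega)] at h
  have h0 : (⟨1 - 1, by omega⟩ : Fin (m + 1)) = 0 := by apply Fin.ext; simp
  rwa [h0] at h

lemma fiber_card (k : ℕ) (w : ColoredPerm (m + 1) r) (hw : w ∈ plusSet (m + 1) r) :
    (univ.filter fun g : Fin (m + 1) → Fin (r * k + 1) =>
      (∃ j, g j = 0) ∧ wg hr g = w).card = (Cset w k).card := by
  classical
  refine Finset.card_bij' (i := fun g _ => toC hr g) (j := fun c _ => gb w c)
    ?hi ?hj ?li ?ri
  case hi =>
    intro g hg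
    simp only [Finset.mem_filter, Finset.mem_univ, true_and] at hg
    obtain ⟨hz, hwg⟩ := hg
    simp only [Cset, Finset.mem_filter, Finset.mem_univ, true_and]
    refine ⟨?_, ?_, ?_⟩
    · intro a b hab
      rw [Fin.le_def]
      exact cg_mono hr g hab
    · apply Fin.ext
      show cg hr g 0 = (0 : Fin (k + 1)).val
      rw [cg_zero hr g hz]
      simp
    · show cg hr g (Fin.last m) + des0 w ≤ k
      rw [← hwg]
      exact cg_last hr g
  case hj =>
    intro c hc
    simp only [Cset, Finset.mem_filter, Finset.mem_univ, true_and] at hc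
    obtain ⟨hmono, hc0, hck⟩ := hc
    simp only [Finset.mem_filter, Finset.mem_univ, true_and]
    refine ⟨⟨w.1 0, ?_⟩, gb_wg hr w c hmono hck⟩
    apply Fin.ext
    rw [gb_val w c hmono hck]
    have hc0v : (c 0 : ℕ) = 0 := congrArg Fin.val hc0
    have h0 : ((0 : Fin (m + 1)) : ℕ) = 0 := rfl
    rw [h0, D_zero, hc0v, plus_color_zero hr w hw]
    simp
  case li =>
    intro g hg
    simp only [Finset.mem_filter, Finset.mem_univ, true_and] at hg
    rw [← hg.2]
    exact gb_toC hr g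
  case ri =>
    intro c hc
    simp only [Cset, Finset.mem_filter, Finset.mem_univ, true_and] at hc
    obtain ⟨hmono, hc0, hck⟩ := hc
    funext i
    apply Fin.ext
    show cg hr (gb w c) i = (c i : ℕ)
    exact cg_gb hr w c hmono hck i

lemma count_nonzero (k : ℕ) :
    (univ.filter fun g : Fin (m + 1) → Fin (r * k + 1) => ¬ ∃ j, g j = 0).card
      = (r * k) ^ (m + 1) := by
  classical
  have : (univ.filter fun g : Fin (m + 1) → Fin (r * k + 1) => ¬ ∃ j, g j = 0).card
      = (univ : Finset (Fin (m + 1) → Fin (r * k))).card := by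
    refine Finset.card_bij' (i := fun g hg => fun j => (⟨(g j : ℕ) - 1, ?_⟩ : Fin (r * k)))
      (j := fun h _ => fun j => (⟨(h j : ℕ) + 1, by have := (h j).isLt; omega⟩ : Fin (r * k + 1)))
      ?_ ?_ ?_ ?_
    · rw [Finset.mem_filter] at hg
      push_neg at hg
      have h1 := hg.2 j
      have h2 : (g j : ℕ) ≠ 0 := fun h => h1 (Fin.ext (by simpa using h))
      have := (g j).isLt
      omega
    · intro g hg; exact Finset.mem_univ _
    · intro h hh
      simp only [Finset.mem_filter, Finset.mem_univ, true_and]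
      rintro ⟨j, hj⟩
      have := congrArg Fin.val hj
      simp at this
    · intro g hg
      rw [Finset.mem_filter] at hg
      push_neg at hg
      funext j
      apply Fin.ext
      have h1 := hg.2 j
      have h2 : (g j : ℕ) ≠ 0 := fun h => h1 (Fin.ext (by simpa using h))
      show (g j : ℕ) - 1 + 1 = (g j : ℕ)
      omega
    · intro h hh
      funext j
      apply Fin.ext
      show (h j : ℕ) + 1 - 1 = (h j : ℕ)
      omega
  rw [this, Finset.card_univ]
  simp [Fintype.card_fun]

lemma count_k (k : ℕ) :
    (r * k + 1) ^ (m + 1)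
      = (r * k) ^ (m + 1) + ∑ w ∈ plusSet (m + 1) r, (Cset w k).card := by
  classical
  have htotal : (univ : Finset (Fin (m + 1) → Fin (r * k + 1))).card
      = (r * k + 1) ^ (m + 1) := by
    rw [Finset.card_univ]
    simp [Fintype.card_fun]
  have hsplit := Finset.card_filter_add_card_filter_not
    (s := (univ : Finset (Fin (m + 1) → Fin (r * k + 1))))
    (p := fun g => ∃ j, g j = 0)
  have hzero : (univ.filter fun g : Fin (m + 1) → Fin (r * k + 1) => ∃ j, g j = 0).card
      = ∑ w ∈ plusSet (m + 1) r, (Cset w k).card := by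
    have h1 := Finset.card_eq_sum_card_fiberwise
      (f := fun g : Fin (m + 1) → Fin (r * k + 1) => wg hr g)
      (s := univ.filter fun g : Fin (m + 1) → Fin (r * k + 1) => ∃ j, g j = 0)
      (t := plusSet (m + 1) r)
      (fun g hg => wg_mem_plus hr g (Finset.mem_filter.mp hg).2)
    rw [h1]
    refine Finset.sum_congr rfl fun w hw => ?_
    rw [Finset.filter_filter]
    have heq : (univ.filter fun g : Fin (m + 1) → Fin (r * k + 1) =>
        (∃ j, g j = 0) ∧ wg hr g = w) =
        (univ.filter fun g : Fin (m + 1) → Fin (r * k + 1) =>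
          (∃ j, g j = 0) ∧ (fun g => wg hr g) g = w) := rfl
    rw [← heq]
    exact fiber_card hr k w hw
  have hz2 := count_nonzero (m := m) hr k
  rw [← htotal, ← hsplit, hzero, hz2]
  exact Nat.add_comm _ _

end Count

end PS10

namespace PS10

section MonoCount

lemma sm_gap {L K : ℕ} (f : Fin L → Fin K) (hf : StrictMono f) :
    ∀ i j : Fin L, (i : ℕ) ≤ (j : ℕ) → (f i : ℕ) + ((j : ℕ) - (i : ℕ)) ≤ (f j : ℕ) := by
  have key : ∀ d : ℕ, ∀ i j : Fin L, (j : ℕ) = (i : ℕ) + d →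
      (f i : ℕ) + d ≤ (f j : ℕ) := by
    intro d
    induction d with
    | zero =>
      intro i j hj
      have : i = j := Fin.ext (by omega)
      subst this; omega
    | succ d ih =>
      intro i j hj
      have hj' : (i : ℕ) + d < L := by have := j.isLt; omega
      set j' : Fin L := ⟨(i : ℕ) + d, hj'⟩ with hj'def
      have h1 := ih i j' rfl
      have h2 : f j' < f j := hf (by rw [Fin.lt_def, hj'def]; simp only [Fin.val_mk]; omega)
      rw [Fin.lt_def] at h2
      omega
  intro i j hij
  have := key ((j : ℕ) - (i : ℕ)) i j (by omega)
  omega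

lemma card_strictMono (L K : ℕ) :
    (univ.filter fun f : Fin L → Fin K => StrictMono f).card = K.choose L := by
  classical
  have hfin : (univ.filter fun s : Finset (Fin K) => s.card = L).card = K.choose L := by
    rw [← Fintype.card_subtype]
    rw [Fintype.card_finset_len]
    simp
  rw [← hfin]
  refine Finset.card_bij' (i := fun f _ => Finset.image f univ)
    (j := fun s hs => ⇑(s.orderEmbOfFin (by
      simp only [Finset.mem_filter] at hs; exact hs.2))) ?_ ?_ ?_ ?_
  · intro f hf
    simp only [Finset.mem_filter, Finset.mem_univ, true_and] at hf ⊢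
    rw [Finset.card_image_of_injective _ hf.injective, Finset.card_univ]
    simp
  · intro s hs
    simp only [Finset.mem_filter, Finset.mem_univ, true_and]
    exact (s.orderEmbOfFin _).strictMono
  · intro f hf
    simp only [Finset.mem_filter, Finset.mem_univ, true_and] at hf
    exact (Finset.orderEmbOfFin_unique
      (by rw [Finset.card_image_of_injective _ hf.injective, Finset.card_univ]; simp)
      (fun x => Finset.mem_image_of_mem f (Finset.mem_univ x)) hf).symm
  · intro s hs
    simp only [Finset.mem_filter, Finset.mem_univ, true_and] at hs
    apply Finset.coe_injective
    rw [Finset.coe_image, Finset.coe_univ, Set.image_univ]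
    exact Finset.range_orderEmbOfFin s _

lemma card_mono (L M : ℕ) :
    (univ.filter fun f : Fin L → Fin (M + 1) => Monotone f).card = (M + L).choose L := by
  classical
  rw [← card_strictMono L (M + L)]
  refine Finset.card_bij'
    (i := fun f _ => fun x : Fin L => (⟨(f x : ℕ) + (x : ℕ), by
      have h1 : (f x : ℕ) < M + 1 := (f x).isLt
      have h2 : (x : ℕ) < L := x.isLt
      omega⟩ : Fin (M + L)))
    (j := fun f' hf' => fun x : Fin L => (⟨(f' x : ℕ) - (x : ℕ), by
      simp only [Finset.mem_filter, Finset.mem_univ, true_and] at hf'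
      have hL : (x : ℕ) < L := x.isLt
      have hlast : ((⟨L - 1, by omega⟩ : Fin L) : ℕ) = L - 1 := rfl
      have h1 := sm_gap f' hf' x ⟨L - 1, by omega⟩ (by rw [hlast]; omega)
      have h2 : (f' ⟨L - 1, by omega⟩ : ℕ) < M + L := (f' _).isLt
      simp only [Fin.val_mk] at h1
      omega⟩ : Fin (M + 1))) ?_ ?_ ?_ ?_
  · intro f hf
    simp only [Finset.mem_filter, Finset.mem_univ, true_and] at hf ⊢
    intro x y hxy
    have h1 : (f x : ℕ) ≤ (f y : ℕ) := hf (le_of_lt hxy)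
    have h2 : (x : ℕ) < (y : ℕ) := Fin.lt_def.mp hxy
    rw [Fin.lt_def]
    simp only [Fin.val_mk]
    omega
  · intro f' hf'
    simp only [Finset.mem_filter, Finset.mem_univ, true_and] at hf' ⊢
    intro x y hxy
    have h1 := sm_gap f' hf' x y hxy
    rw [Fin.le_def]
    simp only [Fin.val_mk]
    omega
  · intro f hf
    funext x
    apply Fin.ext
    simp only [Fin.val_mk]
    omega
  · intro f' hf'
    simp only [Finset.mem_filter, Finset.mem_univ, true_and] at hf'
    funext x
    apply Fin.ext
    simp only [Fin.val_mk]
    have h0 : (0 : ℕ) < L := by have := x.isLt; omega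
    have h1 := sm_gap f' hf' ⟨0, h0⟩ x (by simp)
    simp only [Fin.val_mk] at h1
    omega

variable {m r : ℕ}

lemma Cset_card (w : ColoredPerm (m + 1) r) (k : ℕ) :
    (Cset w k).card
      = if des0 w ≤ k then (m + (k - des0 w)).choose m else 0 := by
  classical
  by_cases hd : des0 w ≤ k
  · rw [if_pos hd]
    have : (m + (k - des0 w)).choose m = ((k - des0 w) + m).choose m := by
      rw [Nat.add_comm]
    rw [this, ← card_mono m (k - des0 w)]
    refine Finset.card_bij'
      (i := fun c hc => fun j : Fin m => (⟨(c j.succ : ℕ), by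
        simp only [Cset, Finset.mem_filter, Finset.mem_univ, true_and] at hc
        have h1 : (c j.succ : ℕ) ≤ (c (Fin.last m) : ℕ) := hc.1 (Fin.le_last _)
        omega⟩ : Fin ((k - des0 w) + 1)))
      (j := fun f _ => fun i : Fin (m + 1) => (⟨if h : (i : ℕ) = 0 then 0
          else (f ⟨(i : ℕ) - 1, by have := i.isLt; omega⟩ : ℕ), by
        split
        · omega
        · exact lt_of_lt_of_le (Fin.is_lt _)
            (Nat.succ_le_succ (Nat.sub_le k _))⟩ : Fin (k + 1))) ?_ ?_ ?_ ?_
    · intro c hc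
      simp only [Cset, Finset.mem_filter, Finset.mem_univ, true_and] at hc ⊢
      intro x y hxy
      rw [Fin.le_def]
      simp only [Fin.val_mk]
      exact hc.1 (by rw [Fin.le_def, Fin.val_succ, Fin.val_succ]; omega)
    · intro f hf
      simp only [Finset.mem_filter, Finset.mem_univ, true_and] at hf
      simp only [Cset, Finset.mem_filter, Finset.mem_univ, true_and]
      refine ⟨?_, ?_, ?_⟩
      · intro a b hab
        rw [Fin.le_def]
        simp only [Fin.val_mk]
        have hab' : (a : ℕ) ≤ (b : ℕ) := hab
        split
        · omega
        · split
          · omega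
          · have := hf (show (⟨(a : ℕ) - 1, by have := a.isLt; omega⟩ : Fin m)
                ≤ ⟨(b : ℕ) - 1, by have := b.isLt; omega⟩ by
              rw [Fin.le_def]; simp only [Fin.val_mk]; omega)
            rw [Fin.le_def] at this
            exact this
      · apply Fin.ext
        simp
      · by_cases hm : m = 0
        · rw [dif_pos (by simp [hm, Fin.last])]
          omega
        · rw [dif_neg (by simp [Fin.last]; omega)]
          have := (f ⟨(Fin.last m : ℕ) - 1, by have := (Fin.last m).isLt; omega⟩).isLt
          omega
    · intro c hc
      simp only [Cset, Finset.mem_filter, Finset.mem_univ, true_and] at hc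
      funext i
      apply Fin.ext
      simp only [Fin.val_mk]
      split
      · rename_i h0
        have : i = 0 := Fin.ext (by simpa using h0)
        rw [this, hc.2.1]
        simp
      · rename_i h0
        congr 1
        apply congrArg
        apply Fin.ext
        simp only [Fin.val_succ, Fin.val_mk]
        omega
    · intro f hf
      funext j
      apply Fin.ext
      simp only [Fin.val_mk]
      rw [dif_neg (by simp only [Fin.val_succ]; omega)]
      exact congrArg (fun z => ((f z : Fin (k - des0 w + 1)) : ℕ))
        (Fin.ext (by simp only [Fin.val_succ, Fin.val_mk, Nat.add_sub_cancel]))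
  · rw [if_neg hd]
    rw [Finset.card_eq_zero, Finset.eq_empty_iff_forall_notMem]
    intro c hcm
    simp only [Cset, Finset.mem_filter, Finset.mem_univ, true_and] at hcm
    omega

end MonoCount

end PS10

namespace PS10

lemma psPerD (m d : ℕ) :
    (1 - PowerSeries.X : PowerSeries ℤ) ^ (m + 1) *
      PowerSeries.mk (fun k => ((if d ≤ k then (m + (k - d)).choose m else 0 : ℕ) : ℤ))
    = PowerSeries.X ^ d := by
  have hmk : PowerSeries.mk (fun k => ((if d ≤ k then (m + (k - d)).choose m else 0 : ℕ) : ℤ))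
      = PowerSeries.X ^ d * (PowerSeries.invOneSubPow ℤ (m + 1)).val := by
    rw [PowerSeries.invOneSubPow_val_succ_eq_mk_add_choose]
    ext n
    rw [PowerSeries.coeff_mk, mul_comm, PowerSeries.coeff_mul_X_pow']
    rcases le_or_gt d n with h | h
    · rw [if_pos h, if_pos h, PowerSeries.coeff_mk]
    · rw [if_neg (by omega), if_neg (by omega)]
      simp
  rw [hmk, ← mul_assoc, mul_comm ((1 - PowerSeries.X : PowerSeries ℤ) ^ (m + 1)) _,
    mul_assoc]
  rw [show (1 - PowerSeries.X : PowerSeries ℤ) ^ (m + 1)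
      = (PowerSeries.invOneSubPow ℤ (m + 1)).inv from
    (PowerSeries.invOneSubPow_inv_eq_one_sub_pow ℤ (m + 1)).symm]
  rw [(PowerSeries.invOneSubPow ℤ (m + 1)).inv_val, mul_one]

end PS10


/-- For positive integers `n` and `r`, in `ℤ[[t]]`:
`Σ_{w ∈ (ℤ_r≀S_n)⁺} t^{des(w)} = (1−t)^n · Σ_{k≥0} ((rk+1)^n − (rk)^n) t^k`. -/
theorem plusSet_des_powerSeries (n r : ℕ) (hn : 1 ≤ n) (hr : 1 ≤ r) :
    (∑ w ∈ plusSet n r, (PowerSeries.X : PowerSeries ℤ) ^ (desSet w).card) =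
      (1 - PowerSeries.X) ^ n *
        PowerSeries.mk (fun k => ((r * k + 1 : ℕ) : ℤ) ^ n - ((r * k : ℕ) : ℤ) ^ n) := by
  classical
  obtain ⟨m, rfl⟩ : ∃ m, n = m + 1 := ⟨n - 1, by omega⟩
  have hcoef : ∀ k : ℕ, ((r * k + 1 : ℕ) : ℤ) ^ (m + 1) - ((r * k : ℕ) : ℤ) ^ (m + 1)
      = ∑ w ∈ plusSet (m + 1) r, (((PS10.Cset w k).card : ℕ) : ℤ) := by
    intro k
    have h1 := PS10.count_k (m := m) hr k
    have h2 := congrArg (Nat.cast : ℕ → ℤ) h1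
    push_cast at h2 ⊢
    linarith
  have hmk : PowerSeries.mk
        (fun k => ((r * k + 1 : ℕ) : ℤ) ^ (m + 1) - ((r * k : ℕ) : ℤ) ^ (m + 1))
      = ∑ w ∈ plusSet (m + 1) r,
          PowerSeries.mk (fun k => (((PS10.Cset w k).card : ℕ) : ℤ)) := by
    ext kk
    rw [PowerSeries.coeff_mk, map_sum]
    simp only [PowerSeries.coeff_mk]
    exact hcoef kk
  rw [hmk, Finset.mul_sum]
  refine Finset.sum_congr rfl fun w hw => ?_
  rw [PS10.desSet_card w]
  have hC : PowerSeries.mk (fun k => (((PS10.Cset w k).card : ℕ) : ℤ))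
      = PowerSeries.mk (fun k =>
          ((if PS10.des0 w ≤ k then (m + (k - PS10.des0 w)).choose m else 0 : ℕ) : ℤ)) := by
    ext kk
    rw [PowerSeries.coeff_mk, PowerSeries.coeff_mk, PS10.Cset_card w kk]
  rw [hC]
  exact (PS10.psPerD m (PS10.des0 w)).symm ▸ PS10.psPerD m (PS10.des0 w)
end

section
/- For all positive integers n and r, Σ_{w ∈ (ℤ_r≀S_n)⁺} t^{des(w)} = E_r( (1 + t + t² + ⋯ + t^{r−1})^n · A_n(t) ), where (ℤ_r≀S_n)⁺ is the set of w = (σ,ε) ∈ ℤ_r ≀ S_n with ε_1 = 0, A_n(t) = Σ_{w ∈ S_n} t^{des(w)} is the Eulerian polynomial of the symmetric group, and E_r : ℤ[t] → ℤ[t] is the linear operator defined on monomials by E_r(t^k) = t^{k/r} if r divides k and E_r(t^k) = 0 otherwise. -/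
open Polynomial Finset

/-- The descent set of an ordinary permutation `w ∈ S_n`:
the set of `i ∈ [n−1]` with `w(i) > w(i+1)`. -/
def pDesSet {n : ℕ} (w : Equiv.Perm (Fin n)) : Finset ℕ :=
  (Finset.Icc 1 (n - 1)).filter fun i => sVal w (i + 1) < sVal w i

/-- The Eulerian polynomial `A_n(t) = Σ_{w ∈ S_n} t^{des(w)}` of the symmetric group. -/
noncomputable def eulerianPoly (n : ℕ) : ℤ[X] :=
  ∑ w : Equiv.Perm (Fin n), X ^ (pDesSet w).card

/-- The linear operator `E_r : ℤ[t] → ℤ[t]` with `E_r(t^k) = t^{k/r}` if `r ∣ k` and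
`E_r(t^k) = 0` otherwise. -/
noncomputable def Er (r : ℕ) (p : ℤ[X]) : ℤ[X] :=
  p.sum fun k a => if r ∣ k then C a * X ^ (k / r) else 0

section Aux

variable {n r : ℕ}

/-- σ-descent indicator at position `k`. -/
def sChi {n : ℕ} (σ : Equiv.Perm (Fin n)) (k : ℕ) : ℕ :=
  if sVal σ (k + 1) < sVal σ k then 1 else 0

/-- colored descent indicator at position `k`. -/
def wChi {n r : ℕ} (w : ColoredPerm n r) (k : ℕ) : ℕ :=
  if eVal w.2 (k + 1) < eVal w.2 k ∨
      (eVal w.2 k = eVal w.2 (k + 1) ∧ sVal w.1 (k + 1) < sVal w.1 k) then 1 else 0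

lemma eVal_lt (hr : 0 < r) (ε : Fin n → Fin r) (k : ℕ) : eVal ε k < r := by
  unfold eVal
  split
  · exact (ε _).isLt
  · exact hr

lemma eVal_out (ε : Fin n → Fin r) (k : ℕ) (hk : n < k) : eVal ε k = 0 := by
  unfold eVal
  rw [dif_neg]
  omega

/-- The local color map at one position. -/
def cNat {n r : ℕ} (σ : Equiv.Perm (Fin n)) (ε : Fin n → Fin r) (k : ℕ) : ℕ :=
  (eVal ε (k + 2) + 2 * r - eVal ε (k + 1) - sChi σ (k + 1)) % r

lemma key_arith (hr : 0 < r) (a b : ℕ) (ha : a < r) (hb : b < r) (S : Prop) [Decidable S] :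
    r * (if b < a ∨ (a = b ∧ S) then 1 else 0) + b
      = (b + 2 * r - a - (if S then 1 else 0)) % r + a + (if S then 1 else 0) := by
  have hs1 : (if S then (1 : ℕ) else 0) ≤ 1 := by split <;> omega
  have hdm := Nat.div_add_mod (b + 2 * r - a - (if S then 1 else 0)) r
  have hmod := Nat.mod_lt (b + 2 * r - a - (if S then 1 else 0)) hr
  set d := (b + 2 * r - a - (if S then 1 else 0)) % r with hd
  set q := (b + 2 * r - a - (if S then 1 else 0)) / r with hq
  have hq2 : q ≤ 2 := by
    by_contra hcon
    have h3 := Nat.mul_le_mul_left r (show 3 ≤ q by omega)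
    omega
  have hq' : q = 1 ∨ q = 2 := by
    rcases Nat.eq_zero_or_pos q with h0 | h0
    · rw [h0, Nat.mul_zero] at hdm; omega
    · omega
  rcases hq' with h | h <;> rw [h] at hdm <;> by_cases hS : S <;>
      simp only [hS, if_true, if_false, and_true, and_false, or_false,
        iff_true, iff_false] at hdm hmod ⊢ <;>
    split_ifs with hc <;> omega

lemma cNat_lt (hr : 0 < r) (σ : Equiv.Perm (Fin n)) (ε : Fin n → Fin r) (k : ℕ) :
    cNat σ ε k < r :=
  Nat.mod_lt _ hr

/-- The position-wise bijection on colors, for fixed `σ`. -/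
def phi (hr : 0 < r) (σ : Equiv.Perm (Fin n)) (ε : Fin n → Fin r) : Fin n → Fin r :=
  fun i => ⟨cNat σ ε i.1, cNat_lt hr σ ε i.1⟩

lemma key_nat (hr : 0 < r) (σ : Equiv.Perm (Fin n)) (ε : Fin n → Fin r) (k : ℕ) :
    r * wChi (σ, ε) (k + 1) + eVal ε (k + 2)
      = cNat σ ε k + eVal ε (k + 1) + sChi σ (k + 1) := by
  have h := key_arith hr (eVal ε (k + 1)) (eVal ε (k + 2)) (eVal_lt hr ε _)
    (eVal_lt hr ε _) (sVal σ (k + 2) < sVal σ (k + 1))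
  simpa [wChi, sChi, cNat, show k + 1 + 1 = k + 2 from rfl] using h

lemma wChi_cancel {r χ χ' a a' b c s : ℕ} (h1 : r * χ + b = c + a + s)
    (h2 : r * χ' + b = c + a' + s) (hχ : χ ≤ 1) (hχ' : χ' ≤ 1)
    (ha : a < r) (ha' : a' < r) : a = a' := by
  interval_cases χ <;> interval_cases χ' <;> omega

lemma wChi_le (w : ColoredPerm n r) (k : ℕ) : wChi w k ≤ 1 := by
  unfold wChi; split <;> omega

lemma phi_inj (hr : 0 < r) (σ : Equiv.Perm (Fin n)) :
    Function.Injective (phi (n := n) hr σ) := by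
  intro ε ε' h
  have hc : ∀ k, cNat σ ε k = cNat σ ε' k := by
    intro k
    by_cases hk : k < n
    · exact congrArg Fin.val (congrFun h ⟨k, hk⟩)
    · unfold cNat
      rw [eVal_out ε (k + 2) (by omega), eVal_out ε' (k + 2) (by omega),
        eVal_out ε (k + 1) (by omega), eVal_out ε' (k + 1) (by omega)]
  have H : ∀ m : ℕ, ∀ i : Fin n, n ≤ i.1 + 1 + m → ε i = ε' i := by
    intro m
    induction m with
    | zero =>
      intro i hi
      have hb : eVal ε (i.1 + 2) = eVal ε' (i.1 + 2) := by
        rw [eVal_out ε _ (by omega), eVal_out ε' _ (by omega)]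
      have k1 := key_nat hr σ ε i.1
      have k2 := key_nat hr σ ε' i.1
      rw [hb, hc i.1] at k1
      have ha : eVal ε (i.1 + 1) = eVal ε' (i.1 + 1) :=
        wChi_cancel k1 k2 (wChi_le _ _) (wChi_le _ _) (eVal_lt hr ε _) (eVal_lt hr ε' _)
      have : (1 ≤ i.1 + 1 ∧ i.1 + 1 ≤ n) := ⟨by omega, by omega⟩
      unfold eVal at ha
      rw [dif_pos this, dif_pos this] at ha
      exact Fin.ext (by simpa using ha)
    | succ m ih =>
      intro i hi
      have hb : eVal ε (i.1 + 2) = eVal ε' (i.1 + 2) := by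
        by_cases hlt : i.1 + 2 ≤ n
        · have h12 : (1 ≤ i.1 + 2 ∧ i.1 + 2 ≤ n) := ⟨by omega, hlt⟩
          unfold eVal
          rw [dif_pos h12, dif_pos h12]
          have := ih ⟨i.1 + 1, by omega⟩ (by simp; omega)
          simpa using congrArg Fin.val this
        · rw [eVal_out ε _ (by omega), eVal_out ε' _ (by omega)]
      have k1 := key_nat hr σ ε i.1
      have k2 := key_nat hr σ ε' i.1
      rw [hb, hc i.1] at k1
      have ha : eVal ε (i.1 + 1) = eVal ε' (i.1 + 1) :=
        wChi_cancel k1 k2 (wChi_le _ _) (wChi_le _ _) (eVal_lt hr ε _) (eVal_lt hr ε' _)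
      have hmem : (1 ≤ i.1 + 1 ∧ i.1 + 1 ≤ n) := ⟨by omega, by omega⟩
      unfold eVal at ha
      rw [dif_pos hmem, dif_pos hmem] at ha
      exact Fin.ext (by simpa using ha)
  funext i
  exact H n i (by omega)

lemma telescope (f : ℕ → ℕ) (n : ℕ) :
    (∑ i ∈ range n, f (i + 2)) + f 1 = (∑ i ∈ range n, f (i + 1)) + f (n + 1) := by
  induction n with
  | zero => simp
  | succ m ih =>
    rw [Finset.sum_range_succ, Finset.sum_range_succ, show m + 1 + 1 = m + 2 from rfl]
    omega

lemma sum_Icc_one {M : Type*} [AddCommMonoid M] (f : ℕ → M) (n : ℕ) :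
    ∑ k ∈ Icc 1 n, f k = ∑ i ∈ range n, f (i + 1) := by
  rw [← Finset.Ico_add_one_right_eq_Icc, Finset.sum_Ico_eq_sum_range]
  simp [Nat.add_comm]

end Aux

section Aux2

variable {n r : ℕ}

lemma sChi_last (hn : 1 ≤ n) (σ : Equiv.Perm (Fin n)) : sChi σ n = 0 := by
  unfold sChi
  rw [if_neg]
  unfold sVal
  rw [dif_neg (by omega), dif_pos ⟨hn, le_refl n⟩]
  have := (σ ⟨n - 1, by omega⟩).isLt
  omega

lemma card_desSet (σ : Equiv.Perm (Fin n)) (ε : Fin n → Fin r) :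
    (desSet (σ, ε)).card = ∑ i ∈ range n, wChi (σ, ε) (i + 1) := by
  rw [desSet, Finset.card_filter, sum_Icc_one]
  rfl

lemma card_pDesSet (hn : 1 ≤ n) (σ : Equiv.Perm (Fin n)) :
    (pDesSet σ).card = ∑ i ∈ range n, sChi σ (i + 1) := by
  rw [pDesSet, Finset.card_filter, sum_Icc_one]
  obtain ⟨m, rfl⟩ : ∃ m, n = m + 1 := ⟨n - 1, by omega⟩
  rw [Finset.sum_range_succ, show m + 1 - 1 = m from rfl,
    sChi_last hn σ, add_zero]
  rfl

lemma sum_key (hn : 1 ≤ n) (hr : 0 < r) (σ : Equiv.Perm (Fin n)) (ε : Fin n → Fin r) :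
    r * (desSet (σ, ε)).card
      = eVal ε 1 + (∑ i : Fin n, ((phi hr σ ε i : ℕ))) + (pDesSet σ).card := by
  have hsum : ∑ i ∈ range n, (r * wChi (σ, ε) (i + 1) + eVal ε (i + 2))
      = ∑ i ∈ range n, (cNat σ ε i + eVal ε (i + 1) + sChi σ (i + 1)) :=
    Finset.sum_congr rfl fun i _ => key_nat hr σ ε i
  simp only [Finset.sum_add_distrib] at hsum
  have htel := telescope (eVal ε) n
  have h0 : eVal ε (n + 1) = 0 := eVal_out ε (n + 1) (by omega)
  have hphi : (∑ i : Fin n, ((phi hr σ ε i : ℕ))) = ∑ i ∈ range n, cNat σ ε i :=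
    Fin.sum_univ_eq_sum_range (fun k => cNat σ ε k) n
  rw [card_desSet, card_pDesSet hn, hphi, Finset.mul_sum]
  omega

lemma des_pos (hn : 1 ≤ n) (σ : Equiv.Perm (Fin n)) (ε : Fin n → Fin r)
    (h : eVal ε 1 ≠ 0) : 0 < (desSet (σ, ε)).card := by
  have hex : ∃ k, 1 ≤ k ∧ k ≤ n ∧ eVal ε (k + 1) < eVal ε k := by
    by_contra hcon
    push_neg at hcon
    have hmono : ∀ m, m ≤ n → eVal ε 1 ≤ eVal ε (m + 1) := by
      intro m
      induction m with
      | zero => intro _; exact le_refl _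
      | succ p ih =>
        intro hp
        exact le_trans (ih (by omega)) (hcon (p + 1) (by omega) (by omega))
    have h2 := hmono n le_rfl
    rw [eVal_out ε (n + 1) (by omega)] at h2
    omega
  obtain ⟨k, h1, h2, h3⟩ := hex
  refine Finset.card_pos.mpr ⟨k, ?_⟩
  rw [desSet, Finset.mem_filter, Finset.mem_Icc]
  exact ⟨⟨h1, h2⟩, Or.inl h3⟩

lemma Er_zero : Er r (0 : Polynomial ℤ) = 0 :=
  Polynomial.sum_zero_index _

lemma Er_add (p q : Polynomial ℤ) : Er r (p + q) = Er r p + Er r q := by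
  unfold Er
  refine Polynomial.sum_add_index p q _ (fun i => ?_) (fun i b₁ b₂ => ?_)
  · simp
  · split <;> simp [add_mul]

lemma Er_sum {ι : Type*} (s : Finset ι) (g : ι → Polynomial ℤ) :
    Er r (∑ i ∈ s, g i) = ∑ i ∈ s, Er r (g i) := by
  classical
  induction s using Finset.induction with
  | empty => simp [Er_zero]
  | insert _ _ h ih => rw [Finset.sum_insert h, Er_add, ih, Finset.sum_insert h]

lemma Er_pow (m : ℕ) :
    Er r ((Polynomial.X : Polynomial ℤ) ^ m)
      = if r ∣ m then (Polynomial.X : Polynomial ℤ) ^ (m / r) else 0 := by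
  unfold Er
  rw [show ((Polynomial.X : Polynomial ℤ) ^ m) = Polynomial.monomial m 1 by
    rw [Polynomial.X_pow_eq_monomial]]
  rw [Polynomial.sum_monomial_index]
  · simp
  · simp

end Aux2

/-- For positive integers `n` and `r`,
`Σ_{w ∈ (ℤ_r≀S_n)⁺} t^{des(w)} = E_r((1 + t + ⋯ + t^{r−1})^n · A_n(t))`. -/
theorem plusSet_des_eq_Er (n r : ℕ) (hn : 1 ≤ n) (hr : 1 ≤ r) :
    (∑ w ∈ plusSet n r, (X : ℤ[X]) ^ (desSet w).card) =
      Er r ((∑ j ∈ range r, (X : ℤ[X]) ^ j) ^ n * eulerianPoly n) := by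
  have hr0 : 0 < r := hr
  have hpow : ((∑ j ∈ range r, (X : ℤ[X]) ^ j) ^ n)
      = ∑ c : Fin n → Fin r, (X : ℤ[X]) ^ (∑ i : Fin n, ((c i : ℕ))) := by
    rw [← Fin.sum_univ_eq_sum_range (fun j => (X : ℤ[X]) ^ j) r, Fintype.sum_pow]
    exact Finset.sum_congr rfl fun c _ => Finset.prod_pow_eq_pow_sum _ _ _
  have hinner : ((∑ j ∈ range r, (X : ℤ[X]) ^ j) ^ n * eulerianPoly n)
      = ∑ w : ColoredPerm n r,
          (X : ℤ[X]) ^ ((∑ i : Fin n, ((w.2 i : ℕ))) + (pDesSet w.1).card) := by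
    rw [hpow, eulerianPoly, Finset.sum_mul_sum,
      Fintype.sum_prod_type_right (f := fun w : ColoredPerm n r =>
        (X : ℤ[X]) ^ ((∑ i : Fin n, ((w.2 i : ℕ))) + (pDesSet w.1).card))]
    exact Finset.sum_congr rfl fun c _ => Finset.sum_congr rfl fun σ _ =>
      (pow_add _ _ _).symm
  have hbij : (∑ w : ColoredPerm n r,
        (X : ℤ[X]) ^ ((∑ i : Fin n, ((w.2 i : ℕ))) + (pDesSet w.1).card))
      = ∑ w : ColoredPerm n r,
          (X : ℤ[X]) ^ (r * (desSet w).card - eVal w.2 1) := by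
    refine (Fintype.sum_bijective (fun w : ColoredPerm n r => (w.1, phi hr0 w.1 w.2))
      ?_ _ _ ?_).symm
    · have hinj : Function.Injective
          (fun w : ColoredPerm n r => (w.1, phi hr0 w.1 w.2)) := by
        rintro ⟨σ, ε⟩ ⟨σ', ε'⟩ h
        simp only [Prod.mk.injEq] at h
        obtain ⟨h1, h2⟩ := h
        subst h1
        rw [phi_inj hr0 σ h2]
      exact Finite.injective_iff_bijective.mp hinj
    · rintro ⟨σ, ε⟩
      have hk := sum_key hn hr0 σ ε
      have hle : eVal ε 1 ≤ r * (desSet (σ, ε)).card := by omega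
      dsimp only
      congr 1
      omega
  rw [hinner, hbij, Er_sum]
  rw [show plusSet n r = Finset.univ.filter fun w : ColoredPerm n r =>
    eVal w.2 1 = 0 from rfl, Finset.sum_filter]
  refine Finset.sum_congr rfl fun w _ => ?_
  rw [Er_pow]
  by_cases h1 : eVal w.2 1 = 0
  · rw [if_pos h1, h1, Nat.sub_zero, if_pos (dvd_mul_right r _),
      Nat.mul_div_cancel_left _ hr0]
  · rw [if_neg h1, if_neg ?_]
    intro hdvd
    obtain ⟨t, ht⟩ := hdvd
    have hd : 0 < (desSet w).card := des_pos hn w.1 w.2 h1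
    have hε : eVal w.2 1 < r := eVal_lt hr0 w.2 1
    have hle : r ≤ r * (desSet w).card := Nat.le_mul_of_pos_right r hd
    have ht' : r * (desSet w).card = eVal w.2 1 + r * t := by omega
    have h2 : t < (desSet w).card := by
      by_contra hcon
      have := Nat.mul_le_mul_left r (show (desSet w).card ≤ t by omega)
      omega
    obtain ⟨u, hu⟩ : ∃ u, (desSet w).card = t + (u + 1) :=
      ⟨(desSet w).card - t - 1, by omega⟩
    rw [hu, Nat.mul_add, Nat.mul_add, Nat.mul_one] at ht'
    omega
end

section
/- For every positive integer r, the exponential generating function of the colored binomial Eulerian polynomials satisfies, in the ring (ℚ[t])[[z]], the identity (e^{rtz} − t·e^{rz}) · Σ_{n≥0} Ã_{n,r}(t) zⁿ/n! = (1−t)·e^{(rt+1)z}, where for a ∈ ℚ[t] the symbol e^{az} denotes the formal power series Σ_{n≥0} aⁿ zⁿ/n! in (ℚ[t])[[z]]. -/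
open Polynomial Finset

/-- The colored Eulerian polynomial `A_{n,r}(t)` as a polynomial over `ℚ`. -/
noncomputable def colEulerianQ (n r : ℕ) : ℚ[X] :=
  ∑ w : ColoredPerm n r, X ^ (desSet w).card

/-- The colored binomial Eulerian polynomial `Ã_{n,r}(t)` as a polynomial over `ℚ`. -/
noncomputable def colBinomEulerianQ (n r : ℕ) : ℚ[X] :=
  ∑ m ∈ range (n + 1), (n.choose m : ℚ[X]) * X ^ (n - m) * colEulerianQ m r

/-- The formal exponential `e^{az} = Σ_{n≥0} aⁿ zⁿ/n!` in `(ℚ[t])[[z]]`, for `a ∈ ℚ[t]`. -/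
noncomputable def expz (a : ℚ[X]) : PowerSeries ℚ[X] :=
  PowerSeries.mk fun n => Polynomial.C ((n.factorial : ℚ)⁻¹) * a ^ n

lemma eVal_of_mem {n r : ℕ} (ε : Fin n → Fin r) {k : ℕ} (h1 : 1 ≤ k) (h2 : k ≤ n) :
    eVal ε k = (ε ⟨k - 1, by omega⟩ : ℕ) := by unfold eVal; rw [dif_pos ⟨h1, h2⟩]

lemma eVal_of_gt {n r : ℕ} (ε : Fin n → Fin r) {k : ℕ} (h : n < k) :
    eVal ε k = 0 := by unfold eVal; rw [dif_neg (by omega)]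

lemma sVal_of_mem {n : ℕ} (σ : Equiv.Perm (Fin n)) {k : ℕ} (h1 : 1 ≤ k) (h2 : k ≤ n) :
    sVal σ k = (σ ⟨k - 1, by omega⟩ : ℕ) + 1 := by unfold sVal; rw [dif_pos ⟨h1, h2⟩]

lemma sVal_of_gt {n : ℕ} (σ : Equiv.Perm (Fin n)) {k : ℕ} (h : n < k) :
    sVal σ k = n + 1 := by unfold sVal; rw [dif_neg (by omega)]

/-- base-`b` lexicographic comparison -/
lemma base_lt {b q1 e1 q2 e2 : ℕ} (h1 : e1 < b) (h2 : e2 < b) :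
    q1 * b + e1 < q2 * b + e2 ↔ (q1 < q2 ∨ (q1 = q2 ∧ e1 < e2)) := by
  constructor
  · intro h
    rcases Nat.lt_trichotomy q1 q2 with h' | h' | h'
    · exact Or.inl h'
    · subst h'; exact Or.inr ⟨rfl, by omega⟩
    · exfalso
      have h2' : q2 * b + b ≤ q1 * b := by
        have := Nat.mul_le_mul_right b h'
        rwa [Nat.succ_mul] at this
      omega
  · rintro (h' | ⟨rfl, h'⟩)
    · have h2' : q1 * b + b ≤ q2 * b := by
        have := Nat.mul_le_mul_right b h'
        rwa [Nat.succ_mul] at this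
      omega
    · omega

/-- 0-indexed key -/
def kap {m r : ℕ} (w : ColoredPerm m r) (i : ℕ) : ℕ :=
  if h : i < m then (w.2 ⟨i, h⟩ : ℕ) * (m + 1) + (w.1 ⟨i, h⟩ : ℕ) else m

lemma kap_of_lt {m r : ℕ} (w : ColoredPerm m r) {i : ℕ} (h : i < m) :
    kap w i = (w.2 ⟨i, h⟩ : ℕ) * (m + 1) + (w.1 ⟨i, h⟩ : ℕ) := by
  unfold kap; rw [dif_pos h]

lemma kap_of_ge {m r : ℕ} (w : ColoredPerm m r) {i : ℕ} (h : m ≤ i) :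
    kap w i = m := by unfold kap; rw [dif_neg (by omega)]

def desCard {m r : ℕ} (w : ColoredPerm m r) : ℕ :=
  ((range m).filter fun i => kap w (i + 1) < kap w i).card

def cnt {m r : ℕ} (w : ColoredPerm m r) (i : ℕ) : ℕ :=
  ((range i).filter fun l => kap w (l + 1) < kap w l).card

lemma cnt_zero {m r : ℕ} (w : ColoredPerm m r) : cnt w 0 = 0 := rfl

lemma cnt_succ {m r : ℕ} (w : ColoredPerm m r) (i : ℕ) :
    cnt w (i + 1) = cnt w i + (if kap w (i + 1) < kap w i then 1 else 0) := by
  unfold cnt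
  rw [Finset.range_add_one, Finset.filter_insert]
  split
  · rw [Finset.card_insert_of_notMem (by simp)]
  · omega

lemma cnt_m_eq {m r : ℕ} (w : ColoredPerm m r) : cnt w m = desCard w := rfl

lemma cnt_le {m r : ℕ} (w : ColoredPerm m r) (i : ℕ) : cnt w i ≤ i :=
  le_trans (Finset.card_filter_le _ _) (by simp)

lemma cnt_mono {m r : ℕ} (w : ColoredPerm m r) {i j : ℕ} (h : i ≤ j) : cnt w i ≤ cnt w j :=
  Finset.card_le_card (Finset.filter_subset_filter _ (by simpa using Finset.range_subset_range.2 h))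

lemma desCard_le {m r : ℕ} (w : ColoredPerm m r) : desCard w ≤ m :=
  cnt_le w m

lemma kap_lt_iff {m r : ℕ} (w : ColoredPerm m r) (i : ℕ) (h1 : i + 1 < m) :
    kap w (i + 1) < kap w i ↔
      ((w.2 ⟨i + 1, h1⟩ : ℕ) < w.2 ⟨i, by omega⟩ ∨
        ((w.2 ⟨i, by omega⟩ : ℕ) = w.2 ⟨i + 1, h1⟩ ∧
          (w.1 ⟨i + 1, h1⟩ : ℕ) < w.1 ⟨i, by omega⟩)) := by
  have hi : i < m := by omega
  have hb := base_lt (b := m + 1) (q1 := (w.2 ⟨i + 1, h1⟩ : ℕ)) (e1 := (w.1 ⟨i + 1, h1⟩ : ℕ))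
    (q2 := (w.2 ⟨i, hi⟩ : ℕ)) (e2 := (w.1 ⟨i, hi⟩ : ℕ))
    (Nat.lt_succ_of_lt (Fin.is_lt _)) (Nat.lt_succ_of_lt (Fin.is_lt _))
  rw [kap_of_lt w h1, kap_of_lt w hi, hb]
  constructor <;> (rintro (h | ⟨h1, h2⟩) <;> [exact Or.inl h; exact Or.inr ⟨h1.symm, h2⟩])

lemma kap_last_lt_iff {m r : ℕ} (w : ColoredPerm m r) (h : 0 < m) :
    kap w m < kap w (m - 1) ↔ 0 < (w.2 ⟨m - 1, by omega⟩ : ℕ) := by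
  have h0 : m - 1 < m := by omega
  rw [kap_of_ge w (le_refl m), kap_of_lt w h0]
  have hs : (w.1 ⟨m - 1, h0⟩ : ℕ) < m := Fin.is_lt _
  rcases Nat.eq_zero_or_pos (w.2 ⟨m - 1, h0⟩ : ℕ) with he | he
  · rw [he]
    constructor <;> intro hh <;> omega
  · have h2' : (m + 1) ≤ (w.2 ⟨m - 1, h0⟩ : ℕ) * (m + 1) := by
      calc m + 1 = 1 * (m+1) := (one_mul _).symm
      _ ≤ _ := Nat.mul_le_mul_right _ he
    constructor <;> intro hh
    · exact he
    · omega

lemma desCond_iff {m r : ℕ} (w : ColoredPerm m r) (k : ℕ) (hk1 : 1 ≤ k) (hk2 : k ≤ m) :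
    (eVal w.2 (k + 1) < eVal w.2 k ∨
      (eVal w.2 k = eVal w.2 (k + 1) ∧ sVal w.1 (k + 1) < sVal w.1 k)) ↔
    kap w k < kap w (k - 1) := by
  have hk0 : k - 1 < m := by omega
  rcases Nat.lt_or_ge k m with hk | hk
  · have hkk : k < m := hk
    have hb := base_lt (b := m + 1) (q1 := (w.2 ⟨k, hkk⟩ : ℕ)) (e1 := (w.1 ⟨k, hkk⟩ : ℕ))
      (q2 := (w.2 ⟨k - 1, hk0⟩ : ℕ)) (e2 := (w.1 ⟨k - 1, hk0⟩ : ℕ))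
      (Nat.lt_succ_of_lt (Fin.is_lt _)) (Nat.lt_succ_of_lt (Fin.is_lt _))
    rw [eVal_of_mem w.2 (by omega) (by omega : k + 1 ≤ m), eVal_of_mem w.2 hk1 hk2,
      sVal_of_mem w.1 (by omega) (by omega : k + 1 ≤ m), sVal_of_mem w.1 hk1 hk2,
      kap_of_lt w hkk, kap_of_lt w hk0, hb]
    have hij : (⟨k + 1 - 1, by omega⟩ : Fin m) = ⟨k, hkk⟩ := by apply Fin.ext; simp
    rw [hij]
    constructor <;> (rintro (h | ⟨h1, h2⟩) <;> [exact Or.inl h; exact Or.inr (by omega)])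
  · have hkm : m = k := by omega
    subst hkm
    have h0 : m - 1 < m := by omega
    rw [eVal_of_gt w.2 (show m < m + 1 by omega), eVal_of_mem w.2 hk1 le_rfl,
      sVal_of_gt w.1 (show m < m + 1 by omega), sVal_of_mem w.1 hk1 le_rfl,
      kap_last_lt_iff w (show 0 < m by omega)]
    have hs : (w.1 ⟨m - 1, by omega⟩ : ℕ) < m := Fin.is_lt _
    constructor
    · rintro (h | ⟨h1, h2⟩) <;> omega
    · intro h; exact Or.inl h

lemma desSet_card_eq {m r : ℕ} (w : ColoredPerm m r) : (desSet w).card = desCard w := by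
  unfold desSet desCard
  refine Finset.card_bij' (fun k _ => k - 1) (fun i _ => i + 1) ?_ ?_ ?_ ?_
  · intro k hk
    simp only [Finset.mem_filter, Finset.mem_Icc] at hk
    simp only [Finset.mem_filter, Finset.mem_range]
    obtain ⟨⟨h1, h2⟩, hc⟩ := hk
    rw [desCond_iff w k h1 h2] at hc
    refine ⟨by omega, ?_⟩
    rwa [show k - 1 + 1 = k by omega]
  · intro i hi
    simp only [Finset.mem_filter, Finset.mem_range] at hi
    simp only [Finset.mem_filter, Finset.mem_Icc]
    refine ⟨⟨by omega, by omega⟩, ?_⟩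
    rw [desCond_iff w (i + 1) (by omega) (by omega)]
    simpa using hi.2
  · intro k hk
    simp only [Finset.mem_filter, Finset.mem_Icc] at hk
    omega
  · intro i _
    omega

section Step

lemma base_le {b q1 e1 q2 e2 : ℕ} (h1 : e1 < b) (h2 : e2 < b) :
    q1 * b + e1 ≤ q2 * b + e2 ↔ (q1 < q2 ∨ (q1 = q2 ∧ e1 ≤ e2)) := by
  rw [← Nat.not_lt, base_lt h2 h1]
  omega

lemma base_eq {b q1 e1 q2 e2 : ℕ} (h1 : e1 < b) (h2 : e2 < b) :
    q1 * b + e1 = q2 * b + e2 ↔ (q1 = q2 ∧ e1 = e2) := by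
  rw [le_antisymm_iff, base_le h1 h2, base_le h2 h1]
  omega

lemma step_arith {r : ℕ} (hr : 0 < r) (A1 A2 E1 E2 S1 S2 : ℕ)
    (h1 : A1 % r = E1) (h2 : A2 % r = E2) (hE1 : E1 < r) (hE2 : E2 < r) (hS : S1 ≠ S2)
    (D : Prop) [Decidable D] (hD : D ↔ (E2 < E1 ∨ (E1 = E2 ∧ S2 < S1))) :
    (A1 ≤ A2 ∧ (A1 = A2 → S1 < S2)) ↔ A1 / r + (if D then 1 else 0) ≤ A2 / r := by
  have hA1 : A1 = A1 / r * r + E1 := by rw [← h1]; exact (Nat.div_add_mod' A1 r).symm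
  have hA2 : A2 = A2 / r * r + E2 := by rw [← h2]; exact (Nat.div_add_mod' A2 r).symm
  generalize hq1 : A1 / r = q1 at hA1 ⊢
  generalize hq2 : A2 / r = q2 at hA2 ⊢
  rw [hA1, hA2, base_le hE1 hE2, base_eq hE1 hE2]
  split_ifs with h
  · rw [hD] at h
    constructor <;> intro hh <;> [omega; (constructor <;> [omega; (intro; omega)])]
  · rw [hD] at h
    push_neg at h
    obtain ⟨hd1, hd2⟩ := h
    constructor <;> intro hh
    · omega
    · refine ⟨by omega, fun hqq => ?_⟩
      have hEe : E1 = E2 := by omega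
      have := hd2 hEe
      omega

lemma top_arith {r j : ℕ} (hr : 0 < r) (A1 E1 : ℕ)
    (h1 : A1 % r = E1) (hE1 : E1 < r)
    (D : Prop) [Decidable D] (hD : D ↔ 0 < E1) :
    A1 ≤ j * r ↔ A1 / r + (if D then 1 else 0) ≤ j := by
  have hA1 : A1 = A1 / r * r + E1 := by rw [← h1]; exact (Nat.div_add_mod' A1 r).symm
  generalize hq1 : A1 / r = q1 at hA1 ⊢
  have hjr : j * r = j * r + 0 := rfl
  rw [hA1, hjr, base_le hE1 hr]
  split_ifs with h <;> rw [hD] at h <;> omega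

/-- adjacent compatibility conditions on the sequence `a` of sorted values -/
def AdjOK {m r : ℕ} (w : ColoredPerm m r) (a : Fin m → ℕ) : Prop :=
  ∀ k (hk : k + 1 < m), a ⟨k, by omega⟩ ≤ a ⟨k + 1, hk⟩ ∧
    (a ⟨k, by omega⟩ = a ⟨k + 1, hk⟩ → (w.1 ⟨k, by omega⟩ : ℕ) < w.1 ⟨k + 1, hk⟩)

/-- gap conditions on the quotients `a/r` -/
def GapOK {m r : ℕ} (w : ColoredPerm m r) (a : Fin m → ℕ) : Prop :=
  ∀ k (hk : k + 1 < m),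
    a ⟨k, by omega⟩ / r + (if kap w (k + 1) < kap w k then 1 else 0) ≤ a ⟨k + 1, hk⟩ / r

lemma adjOK_iff_gapOK {m r : ℕ} (hr : 0 < r) (w : ColoredPerm m r) (a : Fin m → ℕ)
    (hres : ∀ i : Fin m, a i % r = (w.2 i : ℕ)) : AdjOK w a ↔ GapOK w a := by
  unfold AdjOK GapOK
  refine forall_congr' fun k => forall_congr' fun hk => ?_
  have hk' : k < m := by omega
  have hS : (w.1 (⟨k, hk'⟩ : Fin m) : ℕ) ≠ (w.1 ⟨k + 1, hk⟩ : ℕ) := by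
    intro hcc
    have := w.1.injective (Fin.ext hcc)
    simp [Fin.ext_iff] at this
  simp only [kap_lt_iff w k hk]
  exact step_arith hr _ _ _ _ _ _ (hres ⟨k, hk'⟩) (hres ⟨k + 1, hk⟩)
    (Fin.is_lt _) (Fin.is_lt _) hS _ Iff.rfl

lemma le_top_iff {m r j : ℕ} (hr : 0 < r) (hm : 0 < m) (w : ColoredPerm m r) (a : Fin m → ℕ)
    (hres : ∀ i : Fin m, a i % r = (w.2 i : ℕ)) :
    a ⟨m - 1, by omega⟩ ≤ j * r ↔
      a ⟨m - 1, by omega⟩ / r + (if kap w m < kap w (m - 1) then 1 else 0) ≤ j := by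
  have h0 : m - 1 < m := by omega
  simp only [kap_last_lt_iff w hm]
  exact top_arith hr _ _ (hres ⟨m - 1, h0⟩) (Fin.is_lt _) _ Iff.rfl

/-- iterate an adjacent inequality chain (ℕ-valued) -/
lemma chain_le {m : ℕ} (g : ℕ → ℕ) (hadj : ∀ k, k + 1 < m → g k ≤ g (k + 1)) :
    ∀ k l, k ≤ l → l < m → g k ≤ g l := by
  intro k l hkl hl
  induction l with
  | zero => interval_cases k; exact le_rfl
  | succ l ih =>
    rcases Nat.lt_or_ge k (l + 1) with h | h
    · exact (ih (by omega) (by omega)).trans (hadj l hl)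
    · have : k = l + 1 := by omega
      subst this; exact le_rfl

lemma mono_of_adj {m : ℕ} (a : Fin m → ℕ)
    (hadj : ∀ k (hk : k + 1 < m), a ⟨k, by omega⟩ ≤ a ⟨k + 1, hk⟩) : Monotone a := by
  intro i1 i2 h12
  have := chain_le (m := m) (fun k => if h : k < m then a ⟨k, h⟩ else 0)
    (fun k hk => by
      rw [dif_pos (by omega : k < m), dif_pos hk]
      exact hadj k hk) i1.1 i2.1 h12 i2.2
  rw [dif_pos i1.2, dif_pos i2.2] at this
  simpa using this

lemma ties_of_adj {m : ℕ} (a : Fin m → ℕ) (s : Fin m → ℕ) (hmono : Monotone a)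
    (hadj : ∀ k (hk : k + 1 < m), a ⟨k, by omega⟩ = a ⟨k + 1, hk⟩ →
      s ⟨k, by omega⟩ < s ⟨k + 1, hk⟩) :
    ∀ i1 i2 : Fin m, i1 < i2 → a i1 = a i2 → s i1 < s i2 := by
  have key : ∀ d k (hk : k < m) (hkd : k + d + 1 < m),
      a ⟨k, hk⟩ = a ⟨k + d + 1, hkd⟩ → s ⟨k, hk⟩ < s ⟨k + d + 1, hkd⟩ := by
    intro d
    induction d with
    | zero => intro k hk hkd h; exact hadj k hkd h
    | succ d ih =>
      intro k hk hkd h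
      have h1 : k + 1 < m := by omega
      have h2 : a ⟨k, hk⟩ ≤ a ⟨k + 1, h1⟩ := hmono (by rw [Fin.mk_le_mk]; omega)
      have hik : (⟨k + 1 + d + 1, by omega⟩ : Fin m) = ⟨k + (d + 1) + 1, hkd⟩ := by
        apply Fin.ext; simp; omega
      have h3 : a ⟨k + 1, h1⟩ ≤ a ⟨k + (d + 1) + 1, hkd⟩ := hmono (by rw [Fin.mk_le_mk]; omega)
      have he1 : a ⟨k, hk⟩ = a ⟨k + 1, h1⟩ := by omega
      have he2 : a ⟨k + 1, h1⟩ = a ⟨k + 1 + d + 1, by omega⟩ := by rw [hik]; omega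
      calc s ⟨k, hk⟩ < s ⟨k + 1, h1⟩ := hadj k h1 he1
        _ < s ⟨k + 1 + d + 1, by omega⟩ := ih (k + 1) h1 (by omega) he2
        _ = s ⟨k + (d + 1) + 1, hkd⟩ := by rw [hik]
  intro i1 i2 h12 ha
  have hlt : i1.1 < i2.1 := h12
  have hkey := key (i2.1 - i1.1 - 1) i1.1 i1.2 (by omega)
  have hi2 : (⟨i1.1 + (i2.1 - i1.1 - 1) + 1, by omega⟩ : Fin m) = i2 := by
    apply Fin.ext; simp; omega
  have hi1 : (⟨i1.1, i1.2⟩ : Fin m) = i1 := rfl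
  rw [hi1, hi2] at hkey
  exact hkey ha

end Step

section Count

/-- strict mono (ℕ-valued on Fin) grows at least linearly -/
lemma strict_grow {m : ℕ} (f : Fin m → ℕ)
    (hf : ∀ i1 i2 : Fin m, i1 < i2 → f i1 < f i2) :
    ∀ d k (hk : k < m) (hkd : k + d < m), f ⟨k, hk⟩ + d ≤ f ⟨k + d, hkd⟩ := by
  intro d
  induction d with
  | zero => intro k hk hkd; simp
  | succ d ih =>
    intro k hk hkd
    have h1 : k + d < m := by omega
    have h2 := ih k hk h1
    have h3 : f ⟨k + d, h1⟩ < f ⟨k + (d + 1), hkd⟩ := by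
      apply hf; rw [Fin.mk_lt_mk]; omega
    omega

variable {m B : ℕ}

private def embOf (g : {g : Fin m → Fin (B + 1) // ∀ i k : Fin m, i ≤ k → g i ≤ g k})
    (i : Fin m) : Fin (B + m) :=
  ⟨(g.1 i : ℕ) + i, by have := Fin.is_lt (g.1 i); have := i.2; omega⟩

private lemma embOf_strictMono (g : {g : Fin m → Fin (B + 1) // ∀ i k : Fin m, i ≤ k → g i ≤ g k}) :
    StrictMono (embOf g) := by
  intro i1 i2 hlt
  have h1 : (g.1 i1 : ℕ) ≤ g.1 i2 := g.2 i1 i2 hlt.le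
  have h2 : (i1 : ℕ) < i2 := hlt
  simp only [embOf, Fin.mk_lt_mk]
  omega

private lemma orderEmb_ge (s : {s : Finset (Fin (B + m)) // s.card = m}) (i : Fin m) :
    (i : ℕ) ≤ (s.1.orderEmbOfFin s.2 i : ℕ) := by
  have hgrow := strict_grow (fun i => ((s.1.orderEmbOfFin s.2 i : ℕ)))
    (fun i1 i2 h => (s.1.orderEmbOfFin s.2).strictMono h) i.1 0 (by have := i.2; omega)
    (by simpa using i.2)
  have h0 : (⟨0 + i.1, by simpa using i.2⟩ : Fin m) = i := by apply Fin.ext; simp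
  rw [h0] at hgrow
  omega

private lemma orderEmb_le (s : {s : Finset (Fin (B + m)) // s.card = m}) (i : Fin m) :
    (s.1.orderEmbOfFin s.2 i : ℕ) ≤ B + i := by
  have hi : (i : ℕ) < m := i.2
  have hgrow := strict_grow (fun i => ((s.1.orderEmbOfFin s.2 i : ℕ)))
    (fun i1 i2 h => (s.1.orderEmbOfFin s.2).strictMono h) (m - 1 - i.1) i.1 hi (by omega)
  have h3 : (s.1.orderEmbOfFin s.2 ⟨i.1 + (m - 1 - i.1), by omega⟩ : ℕ) < B + m := Fin.is_lt _
  have h4 : (⟨i.1, hi⟩ : Fin m) = i := rfl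
  rw [h4] at hgrow
  omega

private def chainsEquiv (m B : ℕ) :
    {g : Fin m → Fin (B + 1) // ∀ i k : Fin m, i ≤ k → g i ≤ g k} ≃
      {s : Finset (Fin (B + m)) // s.card = m} where
  toFun g := ⟨Finset.univ.image (embOf g), by
    rw [Finset.card_image_of_injective _ (embOf_strictMono g).injective,
      Finset.card_univ, Fintype.card_fin]⟩
  invFun s := ⟨fun i => ⟨(s.1.orderEmbOfFin s.2 i : ℕ) - i, by
      have := orderEmb_le s i; have := i.2; omega⟩, by
    intro i1 i2 h12
    rcases eq_or_lt_of_le h12 with heq | hlt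
    · subst heq; exact le_rfl
    · have hi1 : (i1 : ℕ) < m := i1.2
      have hgrow := strict_grow (fun i => ((s.1.orderEmbOfFin s.2 i : ℕ)))
        (fun j1 j2 h => (s.1.orderEmbOfFin s.2).strictMono h) (i2.1 - i1.1) i1.1 hi1
        (by have := i2.2; have : (i1 : ℕ) < i2 := hlt; omega)
      have h3 : (⟨i1.1 + (i2.1 - i1.1), by have := i2.2; have : (i1:ℕ) < i2 := hlt; omega⟩
          : Fin m) = i2 := by
        apply Fin.ext; simp; have : (i1 : ℕ) < i2 := hlt; omega
      have h4 : (⟨i1.1, hi1⟩ : Fin m) = i1 := rfl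
      rw [h3, h4] at hgrow
      have h5 : (i1 : ℕ) < i2 := hlt
      rw [Fin.mk_le_mk]
      omega⟩
  left_inv g := by
    apply Subtype.ext
    funext i
    apply Fin.ext
    have huniq : embOf g = ⇑((Finset.univ.image (embOf g)).orderEmbOfFin
        (by rw [Finset.card_image_of_injective _ (embOf_strictMono g).injective,
          Finset.card_univ, Fintype.card_fin])) :=
      Finset.orderEmbOfFin_unique _
        (fun x => Finset.mem_image_of_mem _ (Finset.mem_univ x)) (embOf_strictMono g)
    dsimp only
    rw [← congrFun huniq i]
    simp only [embOf]
    omega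
  right_inv s := by
    apply Subtype.ext
    dsimp only
    have himg : ∀ i : Fin m, (embOf ⟨fun i => ⟨(s.1.orderEmbOfFin s.2 i : ℕ) - i, by
        have := orderEmb_le s i; have := i.2; omega⟩, by
      intro i1 i2 h12
      rcases eq_or_lt_of_le h12 with heq | hlt
      · subst heq; exact le_rfl
      · have hi1 : (i1 : ℕ) < m := i1.2
        have hgrow := strict_grow (fun i => ((s.1.orderEmbOfFin s.2 i : ℕ)))
          (fun j1 j2 h => (s.1.orderEmbOfFin s.2).strictMono h) (i2.1 - i1.1) i1.1 hi1
          (by have := i2.2; have : (i1 : ℕ) < i2 := hlt; omega)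
        have h3 : (⟨i1.1 + (i2.1 - i1.1), by have := i2.2; have : (i1:ℕ) < i2 := hlt; omega⟩
            : Fin m) = i2 := by
          apply Fin.ext; simp; have : (i1 : ℕ) < i2 := hlt; omega
        have h4 : (⟨i1.1, hi1⟩ : Fin m) = i1 := rfl
        rw [h3, h4] at hgrow
        have h5 : (i1 : ℕ) < i2 := hlt
        rw [Fin.mk_le_mk]
        omega⟩) i = s.1.orderEmbOfFin s.2 i := by
      intro i
      apply Fin.ext
      simp only [embOf]
      have := orderEmb_ge s i
      omega
    ext x
    simp only [Finset.mem_image, Finset.mem_univ, true_and]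
    constructor
    · rintro ⟨i, rfl⟩
      rw [himg i]
      exact Finset.orderEmbOfFin_mem s.1 s.2 i
    · intro hx
      have hx' : x ∈ Set.range (s.1.orderEmbOfFin s.2) := by
        rw [Finset.range_orderEmbOfFin]
        simpa using hx
      obtain ⟨i, hi⟩ := hx'
      exact ⟨i, by rw [himg i, hi]⟩

/-- the number of monotone maps `Fin m → Fin (B+1)` is `(B+m).choose m` -/
lemma card_mono_maps (m B : ℕ) :
    Fintype.card {g : Fin m → Fin (B + 1) // ∀ i k : Fin m, i ≤ k → g i ≤ g k}
      = (B + m).choose m := by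
  rw [Fintype.card_congr (chainsEquiv m B), Fintype.card_finset_len, Fintype.card_fin]

/-- number of bounded monotone chains with a deficit `d` -/
lemma card_chains (m j d : ℕ) (hd : d ≤ m) :
    Fintype.card {lam : Fin m → Fin (j + 1) //
        (∀ i k : Fin m, i ≤ k → lam i ≤ lam k) ∧ ∀ i, (lam i : ℕ) + d ≤ j}
      = (j + m - d).choose m := by
  rcases le_or_gt d j with hdj | hdj
  · have hEq : {lam : Fin m → Fin (j + 1) //
        (∀ i k : Fin m, i ≤ k → lam i ≤ lam k) ∧ ∀ i, (lam i : ℕ) + d ≤ j} ≃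
        {g : Fin m → Fin ((j - d) + 1) // ∀ i k : Fin m, i ≤ k → g i ≤ g k} :=
      { toFun := fun lam => ⟨fun i => ⟨(lam.1 i : ℕ), by have := lam.2.2 i; omega⟩, by
          intro i k hik
          have := lam.2.1 i k hik
          rw [Fin.mk_le_mk]
          exact this⟩
        invFun := fun g => ⟨fun i => ⟨(g.1 i : ℕ), by have := Fin.is_lt (g.1 i); omega⟩, by
          intro i k hik
          have := g.2 i k hik
          rw [Fin.le_def] at this ⊢
          exact this, by
          intro i
          dsimp only
          have := Fin.is_lt (g.1 i)
          omega⟩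
        left_inv := fun lam => by apply Subtype.ext; funext i; apply Fin.ext; rfl
        right_inv := fun g => by apply Subtype.ext; funext i; apply Fin.ext; rfl }
    rw [Fintype.card_congr hEq, card_mono_maps]
    congr 1
    omega
  · have hm : 0 < m := by omega
    have : IsEmpty {lam : Fin m → Fin (j + 1) //
        (∀ i k : Fin m, i ≤ k → lam i ≤ lam k) ∧ ∀ i, (lam i : ℕ) + d ≤ j} := by
      constructor
      rintro ⟨lam, _, hbd⟩
      have := hbd ⟨0, hm⟩
      omega
    rw [Fintype.card_eq_zero]
    symm
    apply Nat.choose_eq_zero_of_lt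
    omega

end Count

section MainEquiv

variable {m r j : ℕ}

/-- cnt is below the quotients, given the gap conditions -/
lemma cnt_le_q {w : ColoredPerm m r} {a : Fin m → ℕ} (hgap : GapOK w a) :
    ∀ k (hk : k < m), cnt w k ≤ a ⟨k, hk⟩ / r := by
  intro k
  induction k with
  | zero => intro hk; rw [cnt_zero]; exact Nat.zero_le _
  | succ k ih =>
    intro hk
    have h1 := ih (by omega)
    have h2 := hgap k hk
    rw [cnt_succ]
    omega

/-- the normalized chain value (ℕ-indexed) -/
def lamval (w : ColoredPerm m r) (a : Fin m → ℕ) (k : ℕ) : ℕ :=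
  (if h : k < m then a ⟨k, h⟩ else 0) / r - cnt w k

lemma lamval_adj {w : ColoredPerm m r} {a : Fin m → ℕ} (hgap : GapOK w a) :
    ∀ k, k + 1 < m → lamval w a k ≤ lamval w a (k + 1) := by
  intro k hk
  unfold lamval
  rw [dif_pos (by omega : k < m), dif_pos hk]
  have h1 := hgap k hk
  have h2 := cnt_le_q hgap k (by omega)
  rw [cnt_succ]
  omega

lemma lamval_bound {w : ColoredPerm m r} {a : Fin m → ℕ} (hgap : GapOK w a)
    (htop : ∀ (hm : 0 < m),
      a ⟨m - 1, by omega⟩ / r + (if kap w m < kap w (m - 1) then 1 else 0) ≤ j) :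
    ∀ k, k < m → lamval w a k + desCard w ≤ j := by
  intro k hk
  have hm : 0 < m := by omega
  have h0 : m - 1 < m := by omega
  have ht : a ⟨m - 1, h0⟩ / r + (if kap w m < kap w (m - 1) then 1 else 0) ≤ j := htop hm
  have hch := chain_le (lamval w a) (lamval_adj hgap) k (m - 1) (by omega) (by omega)
  have hlast : lamval w a (m - 1) = a ⟨m - 1, h0⟩ / r - cnt w (m - 1) := by
    unfold lamval
    rw [dif_pos h0]
  have hdes : desCard w = cnt w (m - 1) +
      (if kap w m < kap w (m - 1) then 1 else 0) := by
    rw [← cnt_m_eq, ← congrArg (cnt w) (show m - 1 + 1 = m by omega), cnt_succ,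
      show m - 1 + 1 = m from by omega]
  have hq := cnt_le_q hgap (m - 1) h0
  rw [hlast] at hch
  omega

/-- The colored permutation associated to `f` by stable sorting. -/
def toCP (hr : 0 < r) (f : Fin m → Fin (j * r + 1)) : ColoredPerm m r :=
  (Tuple.sort f, fun i => ⟨(f (Tuple.sort f i) : ℕ) % r, Nat.mod_lt _ hr⟩)

def aOf (f : Fin m → Fin (j * r + 1)) : Fin m → ℕ := fun i => (f (Tuple.sort f i) : ℕ)

lemma hres_aOf (hr : 0 < r) (f : Fin m → Fin (j * r + 1)) :
    ∀ i, aOf f i % r = ((toCP hr f).2 i : ℕ) := fun _ => rfl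

lemma adjOK_aOf (hr : 0 < r) (f : Fin m → Fin (j * r + 1)) :
    AdjOK (toCP hr f) (aOf f) := by
  obtain ⟨hmono, hties⟩ := Tuple.eq_sort_iff.mp (rfl : Tuple.sort f = Tuple.sort f)
  intro k hk
  have hk' : k < m := by omega
  have hle : (⟨k, hk'⟩ : Fin m) ≤ ⟨k + 1, hk⟩ := by rw [Fin.mk_le_mk]; omega
  constructor
  · exact hmono hle
  · intro heq
    have hfeq : f (Tuple.sort f ⟨k, hk'⟩) = f (Tuple.sort f ⟨k + 1, hk⟩) := Fin.ext heq
    have := hties ⟨k, hk'⟩ ⟨k + 1, hk⟩ (by rw [Fin.mk_lt_mk]; omega) hfeq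
    exact this

lemma top_aOf (f : Fin m → Fin (j * r + 1)) : ∀ i : Fin m, aOf f i ≤ j * r := by
  intro i
  have := Fin.is_lt (f (Tuple.sort f i))
  unfold aOf
  omega

lemma gapOK_aOf (hr : 0 < r) (f : Fin m → Fin (j * r + 1)) :
    GapOK (toCP hr f) (aOf f) :=
  (adjOK_iff_gapOK hr _ _ (hres_aOf hr f)).mp (adjOK_aOf hr f)

def MSet (j : ℕ) {m r : ℕ} (w : ColoredPerm m r) :=
  {lam : Fin m → Fin (j + 1) //
    (∀ i k : Fin m, i ≤ k → lam i ≤ lam k) ∧ ∀ i, (lam i : ℕ) + desCard w ≤ j}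

noncomputable instance (w : ColoredPerm m r) : Fintype (MSet j w) := by
  unfold MSet; exact Subtype.fintype _

/-- forward map: the chain of a function -/
def toLam (hr : 0 < r) (f : Fin m → Fin (j * r + 1)) : MSet j (toCP hr f) := by
  refine ⟨fun i => ⟨aOf f i / r - cnt (toCP hr f) i.1, ?_⟩, ?_, ?_⟩
  · have hb := lamval_bound (j := j) (gapOK_aOf hr f) ?_ i.1 i.2
    · unfold lamval at hb
      rw [dif_pos i.2] at hb
      have : (⟨i.1, i.2⟩ : Fin m) = i := rfl
      rw [this] at hb
      omega
    · intro hm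
      rw [← le_top_iff hr hm _ _ (hres_aOf hr f)]
      exact top_aOf f _
  · intro i1 i2 h12
    have hadj := lamval_adj (gapOK_aOf hr f)
    have := chain_le (lamval (toCP hr f) (aOf f)) hadj i1.1 i2.1 h12 i2.2
    unfold lamval at this
    rw [dif_pos i1.2, dif_pos i2.2] at this
    rw [Fin.mk_le_mk]
    have e1 : (⟨i1.1, i1.2⟩ : Fin m) = i1 := rfl
    have e2 : (⟨i2.1, i2.2⟩ : Fin m) = i2 := rfl
    rw [e1, e2] at this
    exact this
  · intro i
    have hb := lamval_bound (j := j) (gapOK_aOf hr f) ?_ i.1 i.2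
    · unfold lamval at hb
      rw [dif_pos i.2] at hb
      have : (⟨i.1, i.2⟩ : Fin m) = i := rfl
      rw [this] at hb
      dsimp only
      omega
    · intro hm
      rw [← le_top_iff hr hm _ _ (hres_aOf hr f)]
      exact top_aOf f _

/-- backward map data: the value sequence from a chain -/
def bOf (w : ColoredPerm m r) (lam : MSet j w) : Fin m → ℕ :=
  fun i => ((lam.1 i : ℕ) + cnt w i.1) * r + (w.2 i : ℕ)

lemma hres_bOf (hr : 0 < r) (w : ColoredPerm m r) (lam : MSet j w) :
    ∀ i, bOf w lam i % r = (w.2 i : ℕ) := by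
  intro i
  unfold bOf
  rw [mul_comm, Nat.mul_add_mod]
  exact Nat.mod_eq_of_lt (Fin.is_lt _)

lemma q_bOf (hr : 0 < r) (w : ColoredPerm m r) (lam : MSet j w) :
    ∀ i, bOf w lam i / r = (lam.1 i : ℕ) + cnt w i.1 := by
  intro i
  unfold bOf
  rw [mul_comm, Nat.mul_add_div hr, Nat.div_eq_of_lt (Fin.is_lt _), add_zero]

lemma gapOK_bOf (hr : 0 < r) (w : ColoredPerm m r) (lam : MSet j w) :
    GapOK w (bOf w lam) := by
  intro k hk
  have hk' : k < m := by omega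
  have h1 := q_bOf hr w lam ⟨k, hk'⟩
  have h2 := q_bOf hr w lam ⟨k + 1, hk⟩
  rw [h1, h2]
  dsimp only
  rw [cnt_succ]
  have hmono := lam.2.1 ⟨k, hk'⟩ ⟨k + 1, hk⟩ (by rw [Fin.mk_le_mk]; omega)
  have : (lam.1 ⟨k, hk'⟩ : ℕ) ≤ (lam.1 ⟨k + 1, hk⟩ : ℕ) := hmono
  omega

lemma adjOK_bOf (hr : 0 < r) (w : ColoredPerm m r) (lam : MSet j w) :
    AdjOK w (bOf w lam) :=
  (adjOK_iff_gapOK hr _ _ (hres_bOf hr w lam)).mpr (gapOK_bOf hr w lam)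

lemma mono_bOf (hr : 0 < r) (w : ColoredPerm m r) (lam : MSet j w) :
    Monotone (bOf w lam) :=
  mono_of_adj _ (fun k hk => (adjOK_bOf hr w lam k hk).1)

lemma top_bOf (hr : 0 < r) (w : ColoredPerm m r) (lam : MSet j w) :
    ∀ i, bOf w lam i ≤ j * r := by
  intro i
  have hm : 0 < m := lt_of_le_of_lt (Nat.zero_le _) i.2
  have hlast : bOf w lam ⟨m - 1, by omega⟩ ≤ j * r := by
    rw [le_top_iff hr hm _ _ (hres_bOf hr w lam)]
    rw [q_bOf hr w lam ⟨m - 1, by omega⟩]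
    dsimp only
    have hdes : cnt w (m - 1) + (if kap w m < kap w (m - 1) then 1 else 0) = desCard w := by
      rw [← cnt_m_eq, ← congrArg (cnt w) (show m - 1 + 1 = m by omega), cnt_succ,
        show m - 1 + 1 = m from by omega]
    have hbd := lam.2.2 ⟨m - 1, by omega⟩
    omega
  calc bOf w lam i ≤ bOf w lam ⟨m - 1, by omega⟩ :=
        mono_bOf hr w lam (by rw [Fin.le_def]; dsimp only; have := i.2; omega)
    _ ≤ j * r := hlast

/-- backward map -/
def invF (hr : 0 < r) (w : ColoredPerm m r) (lam : MSet j w) : Fin m → Fin (j * r + 1) :=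
  fun v => ⟨bOf w lam (w.1.symm v), by have := top_bOf hr w lam (w.1.symm v); omega⟩

lemma invF_apply (hr : 0 < r) (w : ColoredPerm m r) (lam : MSet j w) (i : Fin m) :
    invF hr w lam (w.1 i) = ⟨bOf w lam i, by have := top_bOf hr w lam i; omega⟩ := by
  unfold invF
  congr 1 <;> rw [Equiv.symm_apply_apply]

/-- the main equivalence -/
noncomputable def mainEquiv (hr : 0 < r) :
    (Fin m → Fin (j * r + 1)) ≃ Σ w : ColoredPerm m r, MSet j w where
  toFun f := ⟨toCP hr f, toLam hr f⟩
  invFun p := invF hr p.1 p.2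
  left_inv f := by
    funext v
    apply Fin.ext
    unfold invF
    dsimp only
    unfold bOf toLam
    dsimp only
    simp only [show (toCP hr f).1 = Tuple.sort f from rfl]
    have hq := cnt_le_q (gapOK_aOf hr f) ((Tuple.sort f).symm v).1 ((Tuple.sort f).symm v).2
    have heta : (⟨((Tuple.sort f).symm v).1, ((Tuple.sort f).symm v).2⟩ : Fin m)
        = (Tuple.sort f).symm v := rfl
    rw [heta] at hq
    have hsub : aOf f ((Tuple.sort f).symm v) / r - cnt (toCP hr f) ((Tuple.sort f).symm v).1
        + cnt (toCP hr f) ((Tuple.sort f).symm v).1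
        = aOf f ((Tuple.sort f).symm v) / r := by
      have : cnt (toCP hr f) ((Tuple.sort f).symm v).1 ≤ aOf f ((Tuple.sort f).symm v) / r := hq
      omega
    rw [hsub]
    have hdm : aOf f ((Tuple.sort f).symm v) / r * r + ((toCP hr f).2 ((Tuple.sort f).symm v) : ℕ)
        = aOf f ((Tuple.sort f).symm v) := by
      rw [← hres_aOf hr f]
      exact Nat.div_add_mod' _ r
    rw [hdm]
    unfold aOf
    rw [Equiv.apply_symm_apply]
  right_inv p := by
    obtain ⟨w, lam⟩ := p
    have hσ : Tuple.sort (invF hr w lam) = w.1 := by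
      symm
      rw [Tuple.eq_sort_iff]
      constructor
      · intro i1 i2 h12
        rw [Function.comp_apply, Function.comp_apply, invF_apply, invF_apply]
        rw [Fin.mk_le_mk]
        exact mono_bOf hr w lam h12
      · intro i1 i2 h12 hfeq
        rw [invF_apply, invF_apply] at hfeq
        have hbeq : bOf w lam i1 = bOf w lam i2 := congrArg Fin.val hfeq
        have := ties_of_adj (bOf w lam) (fun i => (w.1 i : ℕ)) (mono_bOf hr w lam)
          (fun k hk => (adjOK_bOf hr w lam k hk).2) i1 i2 h12 hbeq
        exact this
    have hw : toCP hr (invF hr w lam) = w := by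
      unfold toCP
      refine Prod.ext hσ ?_
      funext i
      apply Fin.ext
      dsimp only
      rw [hσ, invF_apply]
      dsimp only
      exact hres_bOf hr w lam i
    -- dependent pair equality
    have key : ∀ (w' : ColoredPerm m r) (h : w' = w) (x : MSet j w') (y : MSet j w),
        x.1 = y.1 → (⟨w', x⟩ : Σ w, MSet j w) = ⟨w, y⟩ := by
      rintro w' rfl x y hxy
      exact congrArg _ (Subtype.ext hxy)
    apply key _ hw
    funext i
    apply Fin.ext
    unfold toLam
    dsimp only
    have haof : aOf (invF hr w lam) i = bOf w lam i := by
      unfold aOf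
      rw [hσ, invF_apply]
    rw [haof, hw, q_bOf hr w lam i]
    omega

/-- **Colored Worpitzky identity** -/
lemma worpitzky (hr : 0 < r) (m j : ℕ) :
    ∑ w : ColoredPerm m r, (j + m - (desSet w).card).choose m = (j * r + 1) ^ m := by
  have h1 : Fintype.card (Fin m → Fin (j * r + 1)) = (j * r + 1) ^ m := by
    rw [Fintype.card_fun, Fintype.card_fin, Fintype.card_fin]
  rw [← h1, Fintype.card_congr (mainEquiv hr), Fintype.card_sigma]
  apply Finset.sum_congr rfl
  intro w _
  rw [Fintype.card_congr' (show MSet j w = _ by unfold MSet; rfl), card_chains m j (desCard w) (desCard_le w),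
    desSet_card_eq]

end MainEquiv

section SerMachine

open PowerSeries

/-- `Ser f = ∑_j X^j * f j` in `ℚ⟦X⟧` -/
noncomputable def Ser (f : ℕ → PowerSeries ℚ) : PowerSeries ℚ :=
  PowerSeries.mk fun N => ∑ i ∈ Finset.range (N + 1), PowerSeries.coeff (N - i) (f i)

lemma Ser_coeff (f : ℕ → PowerSeries ℚ) (N : ℕ) :
    PowerSeries.coeff N (Ser f) = ∑ i ∈ Finset.range (N + 1),
      PowerSeries.coeff (N - i) (f i) := PowerSeries.coeff_mk _ _

lemma Ser_congr {f g : ℕ → PowerSeries ℚ} (h : ∀ i, f i = g i) : Ser f = Ser g := by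
  unfold Ser; congr 1; funext N; exact Finset.sum_congr rfl fun i _ => by rw [h i]

lemma Ser_tele (f : ℕ → PowerSeries ℚ) :
    Ser f = f 0 + PowerSeries.X * Ser (fun i => f (i + 1)) := by
  ext N
  rw [map_add, Ser_coeff]
  cases N with
  | zero =>
    rw [PowerSeries.coeff_zero_X_mul]
    simp
  | succ N =>
    rw [PowerSeries.coeff_succ_X_mul, Ser_coeff]
    rw [Finset.sum_range_succ' (fun i => PowerSeries.coeff (N + 1 - i) (f i)) (N + 1)]
    rw [add_comm]
    congr 1
    apply Finset.sum_congr rfl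
    intro i hi
    simp only [Finset.mem_range] at hi
    rw [show N + 1 - (i + 1) = N - i from by omega]

lemma Ser_sub (f g : ℕ → PowerSeries ℚ) : Ser (fun i => f i - g i) = Ser f - Ser g := by
  ext N
  rw [map_sub, Ser_coeff, Ser_coeff, Ser_coeff, ← Finset.sum_sub_distrib]
  exact Finset.sum_congr rfl fun i _ => map_sub _ _ _

lemma Ser_sum {ι : Type*} (s : Finset ι) (F : ι → ℕ → PowerSeries ℚ) :
    Ser (fun i => ∑ x ∈ s, F x i) = ∑ x ∈ s, Ser (F x) := by
  ext N
  rw [Ser_coeff]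
  rw [map_sum]
  have : ∀ i ∈ Finset.range (N + 1),
      PowerSeries.coeff (N - i) (∑ x ∈ s, F x i) = ∑ x ∈ s, PowerSeries.coeff (N - i) (F x i) :=
    fun i _ => map_sum _ _ _
  rw [Finset.sum_congr rfl this, Finset.sum_comm]
  exact Finset.sum_congr rfl fun x _ => (Ser_coeff _ _).symm

lemma triangle_swap {M : Type*} [AddCommMonoid M] (N : ℕ) (F : ℕ → ℕ → M) :
    ∑ k ∈ Finset.range (N + 1), ∑ i ∈ Finset.range (N + 1 - k), F k i
      = ∑ i ∈ Finset.range (N + 1), ∑ k ∈ Finset.range (N + 1 - i), F k i := by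
  rw [Finset.sum_sigma', Finset.sum_sigma']
  refine Finset.sum_nbij' (fun p => ⟨p.2, p.1⟩) (fun p => ⟨p.2, p.1⟩) ?_ ?_ ?_ ?_ ?_ <;>
    intros <;> simp_all only [Finset.mem_sigma, Finset.mem_range] <;> first | omega | rfl

lemma Ser_mul (g : PowerSeries ℚ) (f : ℕ → PowerSeries ℚ) :
    g * Ser f = Ser (fun i => g * f i) := by
  ext N
  rw [PowerSeries.coeff_mul, Finset.Nat.sum_antidiagonal_eq_sum_range_succ_mk, Ser_coeff]
  have lhs_eq : ∀ k ∈ Finset.range (N + 1),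
      PowerSeries.coeff k g * PowerSeries.coeff (N - k) (Ser f)
        = ∑ i ∈ Finset.range (N + 1 - k),
            PowerSeries.coeff k g * PowerSeries.coeff (N - k - i) (f i) := by
    intro k hk
    simp only [Finset.mem_range] at hk
    rw [Ser_coeff, Finset.mul_sum]
    rw [show N - k + 1 = N + 1 - k by omega]
  rw [Finset.sum_congr rfl lhs_eq, triangle_swap]
  apply Finset.sum_congr rfl
  intro i hi
  simp only [Finset.mem_range] at hi
  rw [PowerSeries.coeff_mul, Finset.Nat.sum_antidiagonal_eq_sum_range_succ_mk]
  rw [show (N - i).succ = N + 1 - i by omega]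
  apply Finset.sum_congr rfl
  intro k hk
  simp only [Finset.mem_range] at hk
  dsimp only
  rw [Nat.sub_right_comm]

lemma Ser_ofC (c : ℕ → ℚ) : Ser (fun i => PowerSeries.C (c i)) = PowerSeries.mk c := by
  ext N
  rw [Ser_coeff, PowerSeries.coeff_mk]
  rw [Finset.sum_eq_single N]
  · simp
  · intro i hi hne
    simp only [Finset.mem_range] at hi
    rw [PowerSeries.coeff_C, if_neg (by omega)]
  · intro h
    simp at h

end SerMachine

section Carlitz

variable {r : ℕ}

lemma coeff_colEulerianQ (m d : ℕ) :
    (colEulerianQ m r).coeff d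
      = ∑ w : ColoredPerm m r, (if d = (desSet w).card then (1 : ℚ) else 0) := by
  unfold colEulerianQ
  rw [Polynomial.finset_sum_coeff]
  exact Finset.sum_congr rfl fun w _ => Polynomial.coeff_X_pow _ _

lemma desSet_card_le {m : ℕ} (w : ColoredPerm m r) : (desSet w).card ≤ m := by
  rw [desSet_card_eq]; exact desCard_le w

lemma carlitz_mul (hr : 0 < r) (m : ℕ) :
    (colEulerianQ m r : PowerSeries ℚ) * PowerSeries.mk (fun i => (((m + i).choose m : ℕ) : ℚ))
      = PowerSeries.mk (fun i => (((i * r + 1 : ℕ)) : ℚ) ^ m) := by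
  ext N
  rw [PowerSeries.coeff_mul, Finset.Nat.sum_antidiagonal_eq_sum_range_succ_mk,
    PowerSeries.coeff_mk]
  calc ∑ k ∈ Finset.range N.succ,
        PowerSeries.coeff (k, N - k).1 (colEulerianQ m r : PowerSeries ℚ) *
          PowerSeries.coeff (k, N - k).2 (PowerSeries.mk fun i => (((m + i).choose m : ℕ) : ℚ))
      = ∑ k ∈ Finset.range (N + 1), ∑ w : ColoredPerm m r,
          (if k = (desSet w).card then (((m + (N - k)).choose m : ℕ) : ℚ) else 0) := by
        apply Finset.sum_congr rfl
        intro k _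
        dsimp only
        rw [Polynomial.coeff_coe, PowerSeries.coeff_mk, coeff_colEulerianQ, Finset.sum_mul]
        apply Finset.sum_congr rfl
        intro w _
        rw [ite_mul, one_mul, zero_mul]
    _ = ∑ w : ColoredPerm m r, ∑ k ∈ Finset.range (N + 1),
          (if k = (desSet w).card then (((m + (N - k)).choose m : ℕ) : ℚ) else 0) :=
        Finset.sum_comm
    _ = ∑ w : ColoredPerm m r, (((N + m - (desSet w).card).choose m : ℕ) : ℚ) := by
        apply Finset.sum_congr rfl
        intro w _
        rw [Finset.sum_ite_eq']
        have hdm := desSet_card_le w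
        split_ifs with h
        · simp only [Finset.mem_range] at h
          congr 2
          omega
        · simp only [Finset.mem_range, not_lt] at h
          rw [eq_comm, Nat.cast_eq_zero]
          exact Nat.choose_eq_zero_of_lt (by omega)
    _ = (((N * r + 1 : ℕ)) : ℚ) ^ m := by
        rw [← Nat.cast_sum, ← Nat.cast_pow, worpitzky hr m N]

lemma carlitz_eq (hr : 0 < r) (m : ℕ) :
    (colEulerianQ m r : PowerSeries ℚ)
      = (1 - PowerSeries.X) ^ (m + 1) *
        PowerSeries.mk (fun i => (((i * r + 1 : ℕ)) : ℚ) ^ m) := by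
  have hu := PowerSeries.mk_add_choose_mul_one_sub_pow_eq_one ℚ m
  calc (colEulerianQ m r : PowerSeries ℚ)
      = (colEulerianQ m r : PowerSeries ℚ) *
          ((PowerSeries.mk fun i => (((m + i).choose m : ℕ) : ℚ)) *
            (1 - PowerSeries.X) ^ (m + 1)) := by rw [hu, mul_one]
    _ = ((colEulerianQ m r : PowerSeries ℚ) *
          (PowerSeries.mk fun i => (((m + i).choose m : ℕ) : ℚ))) *
            (1 - PowerSeries.X) ^ (m + 1) := by ring
    _ = PowerSeries.mk (fun i => (((i * r + 1 : ℕ)) : ℚ) ^ m) *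
          (1 - PowerSeries.X) ^ (m + 1) := by rw [carlitz_mul hr]
    _ = (1 - PowerSeries.X) ^ (m + 1) *
          PowerSeries.mk (fun i => (((i * r + 1 : ℕ)) : ℚ) ^ m) := mul_comm _ _

lemma binom_eq (hr : 0 < r) (b : ℕ) :
    (colBinomEulerianQ b r : PowerSeries ℚ) = (1 - PowerSeries.X) *
      Ser (fun i => (PowerSeries.X +
        (1 - PowerSeries.X) * PowerSeries.C (((i * r + 1 : ℕ)) : ℚ)) ^ b) := by
  have hcoe : (colBinomEulerianQ b r : PowerSeries ℚ)
      = ∑ m ∈ Finset.range (b + 1), ((b.choose m : PowerSeries ℚ) *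
          PowerSeries.X ^ (b - m) * (colEulerianQ m r : PowerSeries ℚ)) := by
    unfold colBinomEulerianQ
    rw [← Polynomial.coeToPowerSeries.ringHom_apply, map_sum]
    apply Finset.sum_congr rfl
    intro m _
    rw [map_mul, map_mul, map_natCast, map_pow, Polynomial.coeToPowerSeries.ringHom_apply,
      Polynomial.coeToPowerSeries.ringHom_apply, Polynomial.coe_X]
  rw [hcoe]
  have hterm : ∀ m ∈ Finset.range (b + 1),
      (b.choose m : PowerSeries ℚ) * PowerSeries.X ^ (b - m) *
          (colEulerianQ m r : PowerSeries ℚ)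
        = Ser (fun i => ((b.choose m : PowerSeries ℚ) * PowerSeries.X ^ (b - m) *
            (1 - PowerSeries.X) ^ (m + 1)) *
              PowerSeries.C ((((i * r + 1 : ℕ)) : ℚ) ^ m)) := by
    intro m _
    rw [carlitz_eq hr m, ← Ser_ofC (fun i => (((i * r + 1 : ℕ)) : ℚ) ^ m), ← Ser_mul]
    ring
  rw [Finset.sum_congr rfl hterm, ← Ser_sum, Ser_mul]
  apply Ser_congr
  intro i
  rw [show PowerSeries.X + (1 - PowerSeries.X) * PowerSeries.C (((i * r + 1 : ℕ)) : ℚ)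
      = (1 - PowerSeries.X) * PowerSeries.C (((i * r + 1 : ℕ)) : ℚ) + PowerSeries.X
    from add_comm _ _, add_pow, Finset.mul_sum]
  apply Finset.sum_congr rfl
  intro k _
  rw [mul_pow, ← map_pow]
  ring

end Carlitz

section KeyA

variable {r : ℕ}

/-- the telescoping series `P i = r*X + X + (1-X)*C(i*r+1)` -/
noncomputable def Pser (r : ℕ) (i : ℕ) : PowerSeries ℚ :=
  (r : PowerSeries ℚ) * PowerSeries.X +
    (PowerSeries.X + (1 - PowerSeries.X) * PowerSeries.C (((i * r + 1 : ℕ)) : ℚ))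

lemma Pser_succ (i : ℕ) :
    (r : PowerSeries ℚ) +
        (PowerSeries.X + (1 - PowerSeries.X) * PowerSeries.C (((i * r + 1 : ℕ)) : ℚ))
      = Pser r (i + 1) := by
  unfold Pser
  have hc : ((((i + 1) * r + 1 : ℕ)) : ℚ) = (((i * r + 1 : ℕ)) : ℚ) + (r : ℚ) := by
    push_cast; ring
  rw [hc, map_add]
  have hr' : PowerSeries.C ((r : ℕ) : ℚ) = (r : PowerSeries ℚ) := by
    rw [map_natCast]
  rw [hr']
  ring

lemma Pser_zero : Pser r 0 = (r : PowerSeries ℚ) * PowerSeries.X + 1 := by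
  unfold Pser
  norm_num

lemma keyA (hr : 0 < r) (n : ℕ) :
    ∑ p ∈ Finset.HasAntidiagonal.antidiagonal n, (n.choose p.1 : ℚ[X]) *
        (((r : ℚ[X]) * Polynomial.X) ^ p.1 - Polynomial.X * (r : ℚ[X]) ^ p.1) *
        colBinomEulerianQ p.2 r
      = (1 - Polynomial.X) * ((r : ℚ[X]) * Polynomial.X + 1) ^ n := by
  rw [← Polynomial.coe_inj,
    show ((((1 : ℚ[X]) - Polynomial.X) * ((r : ℚ[X]) * Polynomial.X + 1) ^ n : ℚ[X]) :
        PowerSeries ℚ)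
      = Polynomial.coeToPowerSeries.ringHom ((1 - Polynomial.X) *
          ((r : ℚ[X]) * Polynomial.X + 1) ^ n) from rfl,
    show (((∑ p ∈ Finset.HasAntidiagonal.antidiagonal n, (n.choose p.1 : ℚ[X]) *
          (((r : ℚ[X]) * Polynomial.X) ^ p.1 - Polynomial.X * (r : ℚ[X]) ^ p.1) *
          colBinomEulerianQ p.2 r : ℚ[X])) : PowerSeries ℚ)
      = Polynomial.coeToPowerSeries.ringHom (∑ p ∈ Finset.HasAntidiagonal.antidiagonal n,
          (n.choose p.1 : ℚ[X]) *
          (((r : ℚ[X]) * Polynomial.X) ^ p.1 - Polynomial.X * (r : ℚ[X]) ^ p.1) *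
          colBinomEulerianQ p.2 r) from rfl]
  simp only [map_sum, map_mul, map_sub, map_add, map_pow, map_one, map_natCast,
    Polynomial.coeToPowerSeries.ringHom_apply, Polynomial.coe_X]
  -- now a pure power series identity
  have hbody : ∀ p ∈ Finset.HasAntidiagonal.antidiagonal n,
      (n.choose p.1 : PowerSeries ℚ) *
          (((r : PowerSeries ℚ) * PowerSeries.X) ^ p.1 -
            PowerSeries.X * (r : PowerSeries ℚ) ^ p.1) *
          (colBinomEulerianQ p.2 r : PowerSeries ℚ)
        = Ser (fun i => ((n.choose p.1 : PowerSeries ℚ) *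
            (((r : PowerSeries ℚ) * PowerSeries.X) ^ p.1 -
              PowerSeries.X * (r : PowerSeries ℚ) ^ p.1) * (1 - PowerSeries.X)) *
            (PowerSeries.X +
              (1 - PowerSeries.X) * PowerSeries.C (((i * r + 1 : ℕ)) : ℚ)) ^ p.2) := by
    intro p _
    rw [binom_eq hr p.2, ← Ser_mul]
    ring
  rw [Finset.sum_congr rfl hbody, ← Ser_sum]
  have hQ1 : ∀ i, (Pser r i) ^ n = ∑ p ∈ Finset.HasAntidiagonal.antidiagonal n,
      (n.choose p.1 : PowerSeries ℚ) * ((r : PowerSeries ℚ) * PowerSeries.X) ^ p.1 *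
        (PowerSeries.X +
          (1 - PowerSeries.X) * PowerSeries.C (((i * r + 1 : ℕ)) : ℚ)) ^ p.2 := by
    intro i
    rw [Finset.Nat.sum_antidiagonal_eq_sum_range_succ_mk]
    unfold Pser
    rw [add_pow]
    apply Finset.sum_congr rfl
    intro k _
    dsimp only
    ring
  have hQ2 : ∀ i, (Pser r (i + 1)) ^ n = ∑ p ∈ Finset.HasAntidiagonal.antidiagonal n,
      (n.choose p.1 : PowerSeries ℚ) * (r : PowerSeries ℚ) ^ p.1 *
        (PowerSeries.X +
          (1 - PowerSeries.X) * PowerSeries.C (((i * r + 1 : ℕ)) : ℚ)) ^ p.2 := by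
    intro i
    rw [← Pser_succ, Finset.Nat.sum_antidiagonal_eq_sum_range_succ_mk, add_pow]
    apply Finset.sum_congr rfl
    intro k _
    dsimp only
    ring
  have inner : ∀ i, ∑ p ∈ Finset.HasAntidiagonal.antidiagonal n,
      ((n.choose p.1 : PowerSeries ℚ) *
        (((r : PowerSeries ℚ) * PowerSeries.X) ^ p.1 -
          PowerSeries.X * (r : PowerSeries ℚ) ^ p.1) * (1 - PowerSeries.X)) *
        (PowerSeries.X +
          (1 - PowerSeries.X) * PowerSeries.C (((i * r + 1 : ℕ)) : ℚ)) ^ p.2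
      = (1 - PowerSeries.X) * (Pser r i ^ n - PowerSeries.X * Pser r (i + 1) ^ n) := by
    intro i
    have hsplit : ∀ p ∈ Finset.HasAntidiagonal.antidiagonal n,
        ((n.choose p.1 : PowerSeries ℚ) *
          (((r : PowerSeries ℚ) * PowerSeries.X) ^ p.1 -
            PowerSeries.X * (r : PowerSeries ℚ) ^ p.1) * (1 - PowerSeries.X)) *
          (PowerSeries.X +
            (1 - PowerSeries.X) * PowerSeries.C (((i * r + 1 : ℕ)) : ℚ)) ^ p.2
        = (1 - PowerSeries.X) * ((n.choose p.1 : PowerSeries ℚ) *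
              ((r : PowerSeries ℚ) * PowerSeries.X) ^ p.1 *
              (PowerSeries.X +
                (1 - PowerSeries.X) * PowerSeries.C (((i * r + 1 : ℕ)) : ℚ)) ^ p.2)
          - (1 - PowerSeries.X) * (PowerSeries.X *
              ((n.choose p.1 : PowerSeries ℚ) * (r : PowerSeries ℚ) ^ p.1 *
              (PowerSeries.X +
                (1 - PowerSeries.X) * PowerSeries.C (((i * r + 1 : ℕ)) : ℚ)) ^ p.2)) := by
      intro p _
      ring
    rw [Finset.sum_congr rfl hsplit, Finset.sum_sub_distrib, ← Finset.mul_sum, ← Finset.mul_sum,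
      ← Finset.mul_sum, ← hQ1 i, ← hQ2 i]
    ring
  rw [Ser_congr inner]
  have htele' : Ser (fun i => Pser r i ^ n)
      = Pser r 0 ^ n + PowerSeries.X * Ser (fun i => Pser r (i + 1) ^ n) := by
    have h := Ser_tele (fun i => Pser r i ^ n)
    simpa using h
  calc Ser (fun i => (1 - PowerSeries.X) *
        (Pser r i ^ n - PowerSeries.X * Pser r (i + 1) ^ n))
      = (1 - PowerSeries.X) *
          Ser (fun i => Pser r i ^ n - PowerSeries.X * Pser r (i + 1) ^ n) :=
        (Ser_mul _ _).symm
    _ = (1 - PowerSeries.X) * (Ser (fun i => Pser r i ^ n) -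
          Ser (fun i => PowerSeries.X * Pser r (i + 1) ^ n)) := by rw [Ser_sub]
    _ = (1 - PowerSeries.X) * (Ser (fun i => Pser r i ^ n) -
          PowerSeries.X * Ser (fun i => Pser r (i + 1) ^ n)) := by rw [← Ser_mul]
    _ = (1 - PowerSeries.X) * (Pser r 0 ^ n) := by
        rw [htele']
        ring
    _ = (1 - PowerSeries.X) * ((r : PowerSeries ℚ) * PowerSeries.X + 1) ^ n := by
        rw [Pser_zero]

end KeyA

/-- For every `r ≥ 1`, in `(ℚ[t])[[z]]`:
`(e^{rtz} − t·e^{rz}) · Σ_{n≥0} Ã_{n,r}(t) zⁿ/n! = (1−t)·e^{(rt+1)z}`. -/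
theorem colBinomEulerian_egf (r : ℕ) (hr : 1 ≤ r) :
    (expz ((r : ℚ[X]) * Polynomial.X) -
        PowerSeries.C (R := ℚ[X]) Polynomial.X * expz (r : ℚ[X])) *
      PowerSeries.mk (fun n => Polynomial.C ((n.factorial : ℚ)⁻¹) * colBinomEulerianQ n r) =
    PowerSeries.C (R := ℚ[X]) (1 - Polynomial.X) * expz ((r : ℚ[X]) * Polynomial.X + 1) := by

  have hr' : 0 < r := hr
  refine PowerSeries.ext fun n => ?_
  rw [PowerSeries.coeff_mul, PowerSeries.coeff_C_mul]
  unfold expz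
  simp only [map_sub, PowerSeries.coeff_mk, PowerSeries.coeff_C_mul]
  have hA := keyA hr' n
  have hgoal : (1 - Polynomial.X) * (Polynomial.C ((n.factorial : ℚ)⁻¹) *
      ((r : ℚ[X]) * Polynomial.X + 1) ^ n)
      = ∑ p ∈ Finset.HasAntidiagonal.antidiagonal n, Polynomial.C ((n.factorial : ℚ)⁻¹) *
          ((n.choose p.1 : ℚ[X]) *
            (((r : ℚ[X]) * Polynomial.X) ^ p.1 - Polynomial.X * (r : ℚ[X]) ^ p.1) *
            colBinomEulerianQ p.2 r) := by
    rw [← Finset.mul_sum, hA]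
    ring
  rw [hgoal]
  apply Finset.sum_congr rfl
  intro p hp
  have hpn : p.1 + p.2 = n := Finset.HasAntidiagonal.mem_antidiagonal.mp hp
  have hfact : (p.1 + p.2).choose p.1 * p.1.factorial * p.2.factorial = (p.1 + p.2).factorial := by
    have := Nat.choose_mul_factorial_mul_factorial (Nat.le_add_right p.1 p.2)
    simpa using this
  rw [hpn] at hfact
  have hQ : (p.1.factorial : ℚ)⁻¹ * (p.2.factorial : ℚ)⁻¹
      = (n.factorial : ℚ)⁻¹ * ((n.choose p.1 : ℕ) : ℚ) := by
    have hc : ((n.choose p.1 : ℕ) : ℚ) * (p.1.factorial : ℚ) * (p.2.factorial : ℚ)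
        = (n.factorial : ℚ) := by exact_mod_cast congrArg (Nat.cast : ℕ → ℚ) hfact
    have h1 : (p.1.factorial : ℚ) ≠ 0 := Nat.cast_ne_zero.mpr (Nat.factorial_ne_zero _)
    have h2 : (p.2.factorial : ℚ) ≠ 0 := Nat.cast_ne_zero.mpr (Nat.factorial_ne_zero _)
    have h3 : (n.factorial : ℚ) ≠ 0 := Nat.cast_ne_zero.mpr (Nat.factorial_ne_zero _)
    field_simp
    linarith [hc]
  have hC : Polynomial.C ((p.1.factorial : ℚ)⁻¹) * Polynomial.C ((p.2.factorial : ℚ)⁻¹)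
      = Polynomial.C ((n.factorial : ℚ)⁻¹) * (n.choose p.1 : ℚ[X]) := by
    rw [← map_mul, hQ, map_mul, Polynomial.C_eq_natCast]
  calc (Polynomial.C ((p.1.factorial : ℚ)⁻¹) * ((r : ℚ[X]) * Polynomial.X) ^ p.1 -
        Polynomial.X * (Polynomial.C ((p.1.factorial : ℚ)⁻¹) * (r : ℚ[X]) ^ p.1)) *
        (Polynomial.C ((p.2.factorial : ℚ)⁻¹) * colBinomEulerianQ p.2 r)
      = (Polynomial.C ((p.1.factorial : ℚ)⁻¹) * Polynomial.C ((p.2.factorial : ℚ)⁻¹)) *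
          ((((r : ℚ[X]) * Polynomial.X) ^ p.1 - Polynomial.X * (r : ℚ[X]) ^ p.1) *
            colBinomEulerianQ p.2 r) := by ring
    _ = (Polynomial.C ((n.factorial : ℚ)⁻¹) * (n.choose p.1 : ℚ[X])) *
          ((((r : ℚ[X]) * Polynomial.X) ^ p.1 - Polynomial.X * (r : ℚ[X]) ^ p.1) *
            colBinomEulerianQ p.2 r) := by rw [hC]
    _ = Polynomial.C ((n.factorial : ℚ)⁻¹) *
          ((n.choose p.1 : ℚ[X]) *
            (((r : ℚ[X]) * Polynomial.X) ^ p.1 - Polynomial.X * (r : ℚ[X]) ^ p.1) *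
            colBinomEulerianQ p.2 r) := by ring
end

section
/- Let Δ be a finite abstract simplicial complex on a linearly ordered vertex set, let r be a positive integer, and let a finite group G act simplicially on Δ preserving the induced linear order on vertex sets of faces (if {u,v} ∈ Δ and u < v then w·u < w·v for all w ∈ G), with induced action on V_r(Δ) given by (w·f)(v) = f(w⁻¹·v). Then: (i) for every w ∈ G and every face E of esd_r(Δ), the set w(E) = {w·f : f ∈ E} is a face of esd_r(Δ), so G acts simplicially on esd_r(Δ); and (ii) this action is proper, i.e. whenever w(E) = E for a face E of esd_r(Δ), one has w·f = f for every f ∈ E. -/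
open Finset

variable {V : Type*} [Fintype V] [DecidableEq V] [LinearOrder V]

/-- The support `supp(f) = {v : f(v) ≠ 0}` of a function `f : V → ℕ`. -/
def suppF (f : V → ℕ) : Finset V :=
  Finset.univ.filter fun v => f v ≠ 0

/-- `f` is a vertex of the `r`-fold edgewise subdivision of `Δ`, i.e. `f ∈ V_r(Δ)`:
`supp(f) ∈ Δ` and `Σ_v f(v) = r`. -/
def memVr (Δ : Finset (Finset V)) (r : ℕ) (f : V → ℕ) : Prop :=
  suppF f ∈ Δ ∧ ∑ v, f v = r

/-- `ι(f)(v) = Σ_{u ≤ v} f(u)`, the partial sums of `f` along the linear order on `V`. -/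
def iotaF (f : V → ℕ) (v : V) : ℕ :=
  ∑ u ∈ Finset.univ.filter (· ≤ v), f u

/-- Compatibility of two vertices of the edgewise subdivision:
`ι(f) − ι(g) ∈ {0,1}^V` or `ι(g) − ι(f) ∈ {0,1}^V`. -/
def iotaCompat (f g : V → ℕ) : Prop :=
  (∀ v, ((iotaF f v : ℤ) - iotaF g v) ∈ ({0, 1} : Set ℤ)) ∨
    (∀ v, ((iotaF g v : ℤ) - iotaF f v) ∈ ({0, 1} : Set ℤ))

/-- `E` is a face of the `r`-fold edgewise subdivision `esd_r(Δ)`: a finite set of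
elements of `V_r(Δ)` such that the union of their supports is a face of `Δ` and any two
of them are `ι`-compatible. -/
def IsEsdFace (Δ : Finset (Finset V)) (r : ℕ) (E : Finset (V → ℕ)) : Prop :=
  (∀ f ∈ E, memVr Δ r f) ∧ E.biUnion suppF ∈ Δ ∧
    ∀ f ∈ E, ∀ g ∈ E, iotaCompat f g

/-- The action of a group element `w` on `V_r(Δ)`: `(w·f)(v) = f(w⁻¹·v)`. -/
def actVr {G : Type*} [Group G] [MulAction G V] (w : G) (f : V → ℕ) : V → ℕ :=
  fun v => f (w⁻¹ • v)

set_option linter.unusedSectionVars false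

lemma mem_suppF {f : V → ℕ} {v : V} : v ∈ suppF f ↔ f v ≠ 0 := by
  simp [suppF]

lemma suppF_act {G : Type*} [Group G] [MulAction G V] (w : G) (f : V → ℕ) :
    suppF (actVr w f) = (suppF f).image (fun v => w • v) := by
  ext v
  simp only [mem_suppF, actVr, Finset.mem_image]
  constructor
  · intro h; exact ⟨w⁻¹ • v, h, by simp⟩
  · rintro ⟨u, hu, rfl⟩; simpa using hu

lemma sum_act {G : Type*} [Group G] [MulAction G V] (w : G) (f : V → ℕ) :
    ∑ v, actVr w f v = ∑ v, f v := by
  refine Fintype.sum_equiv (MulAction.toPerm w⁻¹) _ _ ?_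
  intro u
  simp [actVr, MulAction.toPerm_apply, inv_smul_smul]

lemma iota_act {G : Type*} [Group G] [MulAction G V] (w : G) (f : V → ℕ) (v : V) :
    iotaF (actVr w f) v = ∑ u ∈ Finset.univ.filter (fun u => w • u ≤ v), f u := by
  have himg : (Finset.univ.filter (· ≤ v)).image (fun x => w⁻¹ • x)
      = Finset.univ.filter (fun u => w • u ≤ v) := by
    ext u
    simp only [Finset.mem_image, Finset.mem_filter, Finset.mem_univ, true_and]
    constructor
    · rintro ⟨x, hx, rfl⟩; simpa using hx
    · intro h; exact ⟨w • u, h, by simp⟩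
  rw [iotaF, ← himg, Finset.sum_image (fun a _ b _ h => smul_left_cancel w⁻¹ h)]
  rfl

lemma sum_eq_filterF (f : V → ℕ) (F : Finset V) (hf : suppF f ⊆ F)
    (P : V → Prop) [DecidablePred P] :
    ∑ u ∈ Finset.univ.filter P, f u = ∑ u ∈ F.filter P, f u := by
  refine (Finset.sum_subset ?_ ?_).symm
  · intro u hu
    simp only [Finset.mem_filter] at hu ⊢
    exact ⟨Finset.mem_univ u, hu.2⟩
  · intro u hu hnu
    by_contra h
    refine hnu (Finset.mem_filter.mpr ⟨hf (mem_suppF.mpr h), ?_⟩)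
    exact (Finset.mem_filter.mp hu).2

lemma transfer {G : Type*} [Group G] [MulAction G V] (w : G) (F : Finset V)
    (hmono : ∀ u ∈ F, ∀ v ∈ F, u < v → w • u < w • v)
    (f g : V → ℕ) (hf : suppF f ⊆ F) (hg : suppF g ⊆ F)
    (h : ∀ v, ((iotaF f v : ℤ) - iotaF g v) ∈ ({0, 1} : Set ℤ)) :
    ∀ v, ((iotaF (actVr w f) v : ℤ) - iotaF (actVr w g) v) ∈ ({0, 1} : Set ℤ) := by
  intro v
  rw [iota_act, iota_act, sum_eq_filterF f F hf, sum_eq_filterF g F hg]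
  set S := F.filter (fun u => w • u ≤ v) with hSdef
  rcases S.eq_empty_or_nonempty with hS | hS
  · rw [hS]
    simp
  · set t := S.max' hS with htdef
    have htS : t ∈ S := S.max'_mem hS
    have htF : t ∈ F := (Finset.mem_filter.mp htS).1
    have htv : w • t ≤ v := (Finset.mem_filter.mp htS).2
    have hSt : S = F.filter (· ≤ t) := by
      ext u
      simp only [hSdef, Finset.mem_filter]
      constructor
      · rintro ⟨huF, hwu⟩
        exact ⟨huF, S.le_max' u (Finset.mem_filter.mpr ⟨huF, hwu⟩)⟩
      · rintro ⟨huF, hut⟩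
        rcases eq_or_lt_of_le hut with rfl | hlt
        · exact ⟨huF, htv⟩
        · exact ⟨huF, le_of_lt (lt_of_lt_of_le (hmono u huF t htF hlt) htv)⟩
    have hft : iotaF f t = ∑ u ∈ F.filter (· ≤ t), f u := sum_eq_filterF f F hf _
    have hgt : iotaF g t = ∑ u ∈ F.filter (· ≤ t), g u := sum_eq_filterF g F hg _
    rw [hSt, ← hft, ← hgt]
    exact h t

lemma fix_of_image_eq {G : Type*} [Group G] [MulAction G V] (w : G) (F : Finset V)
    (hmono : ∀ u ∈ F, ∀ v ∈ F, u < v → w • u < w • v)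
    (himg : F.image (fun v => w • v) = F) : ∀ v ∈ F, w • v = v := by
  intro v
  induction v using WellFoundedLT.induction with
  | ind v IH =>
    intro hv
    have hwv : w • v ∈ F := by
      rw [← himg]; exact Finset.mem_image_of_mem _ hv
    rcases lt_trichotomy (w • v) v with hlt | heq | hgt
    · have h1 : w • (w • v) = w • v := IH (w • v) hlt hwv
      exact absurd (smul_left_cancel w h1) (ne_of_lt hlt)
    · exact heq
    · obtain ⟨u, huF, hu⟩ : ∃ u ∈ F, w • u = v := by
        rw [← himg] at hv
        exact Finset.mem_image.mp hv
      rcases lt_trichotomy u v with h1 | h2 | h3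
      · have := IH u h1 huF
        exact absurd (this ▸ hu) (ne_of_lt h1)
      · subst h2
        exact absurd hu (ne_of_gt hgt)
      · have hlt2 : w • v < w • u := hmono v hv u huF h3
        rw [hu] at hlt2
        exact absurd hgt (asymm hlt2)

lemma biUnion_act {G : Type*} [Group G] [MulAction G V] (w : G) (E : Finset (V → ℕ)) :
    (E.image (actVr w)).biUnion suppF = (E.biUnion suppF).image (fun v => w • v) := by
  ext v
  simp only [Finset.mem_biUnion, Finset.mem_image]
  constructor
  · rintro ⟨f', ⟨f, hf, rfl⟩, hv⟩
    rw [suppF_act] at hv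
    obtain ⟨u, hu, rfl⟩ := Finset.mem_image.mp hv
    exact ⟨u, ⟨f, hf, hu⟩, rfl⟩
  · rintro ⟨u, ⟨f, hf, hu⟩, rfl⟩
    exact ⟨actVr w f, ⟨f, hf, rfl⟩, by rw [suppF_act]; exact Finset.mem_image_of_mem _ hu⟩

/-- Let `Δ` be a finite simplicial complex on a linearly ordered vertex
set and let the finite group `G` act simplicially on `Δ`, preserving the induced linear
order on vertex sets of faces. Then the induced action on `V_r(Δ)` maps faces of
`esd_r(Δ)` to faces of `esd_r(Δ)`, and this action is proper: if `w(E) = E` for a face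
`E` of `esd_r(Δ)`, then `w` fixes `E` pointwise. -/
theorem esd_action_simplicial_and_proper
    {V : Type*} [Fintype V] [DecidableEq V] [LinearOrder V]
    {G : Type*} [Group G] [Finite G] [MulAction G V]
    (Δ : Finset (Finset V)) (r : ℕ) (hr : 1 ≤ r)
    (hdown : ∀ F ∈ Δ, ∀ F' ⊆ F, F' ∈ Δ)
    (hact : ∀ (w : G), ∀ F ∈ Δ, F.image (fun v => w • v) ∈ Δ)
    (horder : ∀ (w : G) (u v : V), ({u, v} : Finset V) ∈ Δ → u < v → w • u < w • v) :
    (∀ (w : G) (E : Finset (V → ℕ)), IsEsdFace Δ r E →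
        IsEsdFace Δ r (E.image (actVr w))) ∧
    (∀ (w : G) (E : Finset (V → ℕ)), IsEsdFace Δ r E →
        E.image (actVr w) = E → ∀ f ∈ E, actVr w f = f) := by
  have pair_mem : ∀ (F : Finset V), F ∈ Δ → ∀ u ∈ F, ∀ v ∈ F,
      ({u, v} : Finset V) ∈ Δ := by
    intro F hF u hu v hv
    refine hdown F hF _ ?_
    intro x hx
    rcases Finset.mem_insert.mp hx with rfl | hx
    · exact hu
    · rw [Finset.mem_singleton.mp hx]; exact hv
  have monoF : ∀ (w : G) (F : Finset V), F ∈ Δ →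
      ∀ u ∈ F, ∀ v ∈ F, u < v → w • u < w • v := by
    intro w F hF u hu v hv hlt
    exact horder w u v (pair_mem F hF u hu v hv) hlt
  constructor
  · intro w E hE
    obtain ⟨hmem, hF, hcompat⟩ := hE
    refine ⟨?_, ?_, ?_⟩
    · intro f' hf'
      obtain ⟨f, hf, rfl⟩ := Finset.mem_image.mp hf'
      refine ⟨?_, ?_⟩
      · rw [suppF_act]
        exact hact w _ (hmem f hf).1
      · rw [sum_act]
        exact (hmem f hf).2
    · rw [biUnion_act]
      exact hact w _ hF
    · intro f' hf' g' hg'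
      obtain ⟨f, hf, rfl⟩ := Finset.mem_image.mp hf'
      obtain ⟨g, hg, rfl⟩ := Finset.mem_image.mp hg'
      have hfF : suppF f ⊆ E.biUnion suppF := Finset.subset_biUnion_of_mem suppF hf
      have hgF : suppF g ⊆ E.biUnion suppF := Finset.subset_biUnion_of_mem suppF hg
      rcases hcompat f hf g hg with h | h
      · exact Or.inl (transfer w _ (monoF w _ hF) f g hfF hgF h)
      · exact Or.inr (transfer w _ (monoF w _ hF) g f hgF hfF h)
  · intro w E hE hEw f hf
    obtain ⟨hmem, hF, hcompat⟩ := hE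
    have himgF : (E.biUnion suppF).image (fun v => w • v) = E.biUnion suppF := by
      rw [← biUnion_act w E, hEw]
    have hfix : ∀ v ∈ E.biUnion suppF, w • v = v :=
      fix_of_image_eq w _ (monoF w _ hF) himgF
    have hfF : suppF f ⊆ E.biUnion suppF := Finset.subset_biUnion_of_mem suppF hf
    funext v
    by_cases hv : v ∈ E.biUnion suppF
    · show f (w⁻¹ • v) = f v
      have h1 : w • v = v := hfix v hv
      conv_lhs => rw [← h1, inv_smul_smul]
    · have h1 : f v = 0 := by
        by_contra h
        exact hv (hfF (mem_suppF.mpr h))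
      have h2 : f (w⁻¹ • v) = 0 := by
        by_contra h
        have hm : w⁻¹ • v ∈ E.biUnion suppF := hfF (mem_suppF.mpr h)
        refine hv ?_
        rw [← himgF]
        exact Finset.mem_image.mpr ⟨w⁻¹ • v, hm, smul_inv_smul w v⟩
      show f (w⁻¹ • v) = f v
      rw [h1, h2]
end

section
/- Let Δ be a finite abstract simplicial complex on a linearly ordered vertex set, let r be a positive integer, and let a finite group G act simplicially on Δ preserving the induced linear order on vertex sets of faces, with induced action on V_r(Δ) given by (w·f)(v) = f(w⁻¹·v). For w ∈ G, let Δ^w be the subcomplex of Δ consisting of the faces F ∈ Δ with w·v = v for every v ∈ F, with its vertex set carrying the induced linear order. Then for every w ∈ G, a face E of esd_r(Δ) satisfies w(E) = E if and only if E is a face of esd_r(Δ^w) (under the natural inclusion V_r(Δ^w) ⊆ V_r(Δ)); that is, the fixed subcomplex esd_r(Δ)^w equals esd_r(Δ^w). -/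
open Finset

variable {V : Type*} [Fintype V] [DecidableEq V] [LinearOrder V]

/-- The fixed subcomplex `Δ^w`: the faces of `Δ` all of whose vertices are fixed by `w`. -/
def fixedSubcomplex {V : Type*} [Fintype V] [DecidableEq V]
    {G : Type*} [Group G] [MulAction G V] (Δ : Finset (Finset V)) (w : G) :
    Finset (Finset V) :=
  Δ.filter fun F => ∀ v ∈ F, w • v = v


lemma suppF_actVr {V : Type*} [Fintype V] [DecidableEq V]
    {G : Type*} [Group G] [MulAction G V] (w : G) (f : V → ℕ) :
    suppF (actVr w f) = (suppF f).image (fun v => w • v) := by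
  ext v
  simp only [suppF, Finset.mem_filter, Finset.mem_univ, true_and, Finset.mem_image]
  simp only [actVr]
  constructor
  · intro h; exact ⟨w⁻¹ • v, h, smul_inv_smul w v⟩
  · rintro ⟨u, hu, rfl⟩; rwa [inv_smul_smul]


lemma fix_of_strictMonoOn {V : Type*} [Fintype V] [DecidableEq V] [LinearOrder V]
    (F : Finset V) (σ : V → V)
    (hmono : ∀ u ∈ F, ∀ v ∈ F, u < v → σ u < σ v)
    (himg : F.image σ = F) : ∀ v ∈ F, σ v = v := by
  intro v hv
  have hmem : ∀ u ∈ F, σ u ∈ F := fun u hu => himg ▸ Finset.mem_image_of_mem σ hu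
  have hcard : (F.filter (· < v)).card = (F.filter (· < σ v)).card := by
    apply le_antisymm
    · apply Finset.card_le_card_of_injOn σ
      · intro u hu
        simp only [Finset.mem_filter, Finset.mem_coe] at hu ⊢
        exact ⟨hmem u hu.1, hmono u hu.1 v hv hu.2⟩
      · intro a ha b hb hab
        simp only [Finset.mem_coe, Finset.mem_filter] at ha hb
        by_contra hne
        rcases lt_or_gt_of_ne hne with h | h
        · exact absurd hab (ne_of_lt (hmono a ha.1 b hb.1 h))
        · exact absurd hab.symm (ne_of_lt (hmono b hb.1 a ha.1 h))
    · calc (F.filter (· < σ v)).card ≤ ((F.filter (· < v)).image σ).card := by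
            apply Finset.card_le_card
            intro u' hu'
            simp only [Finset.mem_filter] at hu'
            obtain ⟨u, hu, hσu⟩ := Finset.mem_image.mp (by rw [himg]; exact hu'.1 : u' ∈ F.image σ)
            refine Finset.mem_image.mpr ⟨u, Finset.mem_filter.mpr ⟨hu, ?_⟩, hσu⟩
            rcases lt_trichotomy u v with h | h | h
            · exact h
            · exact absurd (hσu ▸ hu'.2) (by rw [h]; exact lt_irrefl _)
            · exact absurd (hσu ▸ hu'.2) (not_lt_of_gt (hmono v hv u hu h))
          _ ≤ (F.filter (· < v)).card := Finset.card_image_le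
  rcases lt_trichotomy v (σ v) with h | h | h
  · exfalso
    have hsub : F.filter (· < v) ⊆ F.filter (· < σ v) := by
      intro u hu; simp only [Finset.mem_filter] at hu ⊢
      exact ⟨hu.1, hu.2.trans h⟩
    have : (F.filter (· < v)).card < (F.filter (· < σ v)).card :=
      Finset.card_lt_card ((Finset.ssubset_iff_of_subset hsub).mpr
        ⟨v, Finset.mem_filter.mpr ⟨hv, h⟩, by simp⟩)
    omega
  · exact h.symm
  · exfalso
    have hsub : F.filter (· < σ v) ⊆ F.filter (· < v) := by
      intro u hu; simp only [Finset.mem_filter] at hu ⊢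
      exact ⟨hu.1, hu.2.trans h⟩
    have : (F.filter (· < σ v)).card < (F.filter (· < v)).card :=
      Finset.card_lt_card ((Finset.ssubset_iff_of_subset hsub).mpr
        ⟨σ v, Finset.mem_filter.mpr ⟨hmem v hv, h⟩, by simp⟩)
    omega


/-- Let `Δ` be a finite simplicial complex on a linearly ordered vertex
set and let the finite group `G` act simplicially on `Δ`, preserving the induced linear
order on vertex sets of faces. Then for every `w ∈ G`, a set `E` is a face of
`esd_r(Δ)` fixed setwise by `w` if and only if `E` is a face of `esd_r(Δ^w)`;
that is, `esd_r(Δ)^w = esd_r(Δ^w)`. -/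
theorem esd_fixed_subcomplex
    {V : Type*} [Fintype V] [DecidableEq V] [LinearOrder V]
    {G : Type*} [Group G] [Finite G] [MulAction G V]
    (Δ : Finset (Finset V)) (r : ℕ) (hr : 1 ≤ r)
    (hdown : ∀ F ∈ Δ, ∀ F' ⊆ F, F' ∈ Δ)
    (hact : ∀ (w : G), ∀ F ∈ Δ, F.image (fun v => w • v) ∈ Δ)
    (horder : ∀ (w : G) (u v : V), ({u, v} : Finset V) ∈ Δ → u < v → w • u < w • v) :
    ∀ (w : G) (E : Finset (V → ℕ)),
      (IsEsdFace Δ r E ∧ E.image (actVr w) = E) ↔ IsEsdFace (fixedSubcomplex Δ w) r E := by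
  intro w E
  constructor
  · rintro ⟨⟨hmem, hbiU, hcompat⟩, himgE⟩
    set F := E.biUnion suppF with hF
    have hFimg : F.image (fun v => w • v) = F := by
      rw [hF, Finset.biUnion_image]
      calc (E.biUnion fun f => (suppF f).image (fun v => w • v))
          = E.biUnion (fun f => suppF (actVr w f)) :=
            Finset.biUnion_congr rfl (fun f _ => (suppF_actVr w f).symm)
        _ = (E.image (actVr w)).biUnion suppF := Finset.image_biUnion.symm
        _ = E.biUnion suppF := by rw [himgE]
    have hmono : ∀ u ∈ F, ∀ v ∈ F, u < v → w • u < w • v := by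
      intro u hu v hv huv
      refine horder w u v (hdown F hbiU _ ?_) huv
      intro x hx
      rcases Finset.mem_insert.mp hx with rfl | hx
      · exact hu
      · rw [Finset.mem_singleton] at hx; subst hx; exact hv
    have hfix : ∀ v ∈ F, w • v = v := fix_of_strictMonoOn F _ hmono hFimg
    refine ⟨?_, ?_, hcompat⟩
    · intro f hf
      obtain ⟨hs, hsum⟩ := hmem f hf
      refine ⟨Finset.mem_filter.mpr ⟨hs, ?_⟩, hsum⟩
      intro v hv
      exact hfix v (Finset.mem_biUnion.mpr ⟨f, hf, hv⟩)
    · exact Finset.mem_filter.mpr ⟨hbiU, hfix⟩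
  · rintro ⟨hmem, hbiU, hcompat⟩
    have hfixsupp : ∀ f ∈ E, ∀ v ∈ suppF f, w • v = v := fun f hf =>
      (Finset.mem_filter.mp (hmem f hf).1).2
    have hid : ∀ f ∈ E, actVr w f = f := by
      intro f hf
      funext v
      show f (w⁻¹ • v) = f v
      by_cases h : f v = 0
      · by_cases h2 : f (w⁻¹ • v) = 0
        · rw [h, h2]
        · exfalso
          have hmem2 : w⁻¹ • v ∈ suppF f :=
            Finset.mem_filter.mpr ⟨Finset.mem_univ _, h2⟩
          have hv := hfixsupp f hf _ hmem2
          rw [smul_inv_smul] at hv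
          rw [hv] at h
          exact h2 h
      · have hvmem : v ∈ suppF f := Finset.mem_filter.mpr ⟨Finset.mem_univ _, h⟩
        have hv := hfixsupp f hf v hvmem
        have : w⁻¹ • v = v := by rw [inv_smul_eq_iff]; exact hv.symm
        rw [this]
    refine ⟨⟨?_, ?_, hcompat⟩, ?_⟩
    · intro f hf
      obtain ⟨hs, hsum⟩ := hmem f hf
      exact ⟨(Finset.mem_filter.mp hs).1, hsum⟩
    · exact (Finset.mem_filter.mp hbiU).1
    · rw [Finset.image_congr (fun f hf => hid f hf)]
      exact Finset.image_id
end
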